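/- arXiv:2502.07134 — 7 statements merged into one kernel-verified Lean document; each statement's English description precedes it below -/
import Mathlib

section
/- Let k ≥ 0 be an integer and let σ be a facet (maximal simplex) of the Vietoris–Rips complex VR(ℤ²;k), where ℤ² carries the ℓ¹ metric. Then there exists a point c ∈ ℝ², each of whose two coordinates is an integer or a half-integer, such that σ = B_{ℝ²}[c, k/2] ∩ ℤ². -/
/-- The ℓ¹ metric on `ℤ × ℤ`. -/
def dZ2 (x y : ℤ × ℤ) : ℤ := |x.1 - y.1| + |x.2 - y.2|

/-- `σ` is a simplex of the Vietoris–Rips complex `VR(V; k)` of the metric space `V`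
with (integer-valued) distance `d`: a finite nonempty subset of diameter at most `k`. -/
def IsVRSimplex {V : Type*} (d : V → V → ℤ) (k : ℤ) (σ : Finset V) : Prop :=
  σ.Nonempty ∧ ∀ x ∈ σ, ∀ y ∈ σ, d x y ≤ k

/-- `σ` is a facet (maximal simplex) of the Vietoris–Rips complex `VR(V; k)`. -/
def IsVRFacet {V : Type*} (d : V → V → ℤ) (k : ℤ) (σ : Finset V) : Prop :=
  IsVRSimplex d k σ ∧ ∀ τ : Finset V, IsVRSimplex d k τ → σ ⊆ τ → σ = τ

/-!
In the coordinates `u = x + y`, `v = x - y` the ℓ¹ metric on `ℤ²` becomes the ℓ∞ metric, so a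
set of diameter at most `k` lies in a box `[a, a + k] × [b, b + k]` in `(u, v)`, where `a` and `b`
are the minima of `u` and `v` over the set. That box itself has diameter at most `k`, so a facet
is such a box. Back in the original coordinates the box is the ℓ¹ ball of radius `k / 2` about
`((a + b + k) / 2, (a - b) / 2)`.
-/

theorem abs_add_abs_le_iff {α : Type*} [AddCommGroup α] [LinearOrder α] [IsOrderedAddMonoid α]
    (s t r : α) : |s| + |t| ≤ r ↔ |s + t| ≤ r ∧ |s - t| ≤ r := by
  refine ⟨fun h => ⟨(abs_add_le s t).trans h, (abs_sub s t).trans h⟩, fun ⟨h₁, h₂⟩ => ?_⟩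
  rw [abs_le] at h₁ h₂
  rcases le_total 0 s with hs | hs <;> rcases le_total 0 t with ht | ht
  · rw [abs_of_nonneg hs, abs_of_nonneg ht]; exact h₁.2
  · rw [abs_of_nonneg hs, abs_of_nonpos ht, ← sub_eq_add_neg]; exact h₂.2
  · rw [abs_of_nonpos hs, abs_of_nonneg ht, neg_add_eq_sub, ← neg_sub, neg_le]; exact h₂.1
  · rw [abs_of_nonpos hs, abs_of_nonpos ht, ← neg_add, neg_le]; exact h₁.1

theorem Int.exists_cast_div_two_eq (n : ℤ) :
    ∃ m : ℤ, (n : ℝ) / 2 = m ∨ (n : ℝ) / 2 = m + 1 / 2 := by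
  obtain ⟨m, rfl | rfl⟩ := Int.even_or_odd' n
  · exact ⟨m, Or.inl (by push_cast; ring)⟩
  · exact ⟨m, Or.inr (by push_cast; ring)⟩

theorem IsVRFacet.coe_eq_of_subset {V : Type*} [DecidableEq V] {d : V → V → ℤ} {k : ℤ}
    {σ : Finset V} (hσ : IsVRFacet d k σ) {S : Set V} (hS : ∀ x ∈ S, ∀ y ∈ S, d x y ≤ k)
    (hσS : ↑σ ⊆ S) : ↑σ = S := by
  refine hσS.antisymm fun p hp => ?_
  have hinsert : ∀ x ∈ insert p σ, x ∈ S := fun x hx => by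
    rcases Finset.mem_insert.mp hx with rfl | hx
    exacts [hp, hσS hx]
  have hsimplex : IsVRSimplex d k (insert p σ) :=
    ⟨Finset.insert_nonempty p σ, fun x hx y hy => hS x (hinsert x hx) y (hinsert y hy)⟩
  rw [hσ.2 _ hsimplex (Finset.subset_insert p σ)]
  exact Finset.mem_insert_self p σ

theorem dZ2_le_iff (x y : ℤ × ℤ) (k : ℤ) :
    dZ2 x y ≤ k ↔
      |(x.1 + x.2) - (y.1 + y.2)| ≤ k ∧ |(x.1 - x.2) - (y.1 - y.2)| ≤ k := by
  have hu : (x.1 + x.2) - (y.1 + y.2) = (x.1 - y.1) + (x.2 - y.2) := by ring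
  have hv : (x.1 - x.2) - (y.1 - y.2) = (x.1 - y.1) - (x.2 - y.2) := by ring
  rw [dZ2, abs_add_abs_le_iff, hu, hv]

def rotatedBox (a b k : ℤ) : Set (ℤ × ℤ) :=
  {p | p.1 + p.2 ∈ Set.Icc a (a + k) ∧ p.1 - p.2 ∈ Set.Icc b (b + k)}

theorem dZ2_le_of_mem_rotatedBox {a b k : ℤ} {x y : ℤ × ℤ} (hx : x ∈ rotatedBox a b k)
    (hy : y ∈ rotatedBox a b k) : dZ2 x y ≤ k := by
  obtain ⟨⟨hx₁, hx₂⟩, hx₃, hx₄⟩ := hx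
  obtain ⟨⟨hy₁, hy₂⟩, hy₃, hy₄⟩ := hy
  rw [dZ2_le_iff, abs_le, abs_le]
  omega

theorem IsVRFacet.exists_coe_eq_rotatedBox {k : ℤ} {σ : Finset (ℤ × ℤ)}
    (hσ : IsVRFacet dZ2 k σ) : ∃ a b : ℤ, ↑σ = rotatedBox a b k := by
  obtain ⟨pu, hpu, hu⟩ := σ.exists_min_image (fun p => p.1 + p.2) hσ.1.1
  obtain ⟨pv, hpv, hv⟩ := σ.exists_min_image (fun p => p.1 - p.2) hσ.1.1
  refine ⟨pu.1 + pu.2, pv.1 - pv.2, hσ.coe_eq_of_subset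
    (fun x hx y hy => dZ2_le_of_mem_rotatedBox hx hy) fun x hx => ?_⟩
  have hxu := ((dZ2_le_iff x pu k).mp (hσ.1.2 x hx pu hpu)).1
  have hxv := ((dZ2_le_iff x pv k).mp (hσ.1.2 x hx pv hpv)).2
  rw [abs_le] at hxu hxv
  exact ⟨⟨hu x hx, by omega⟩, hv x hx, by omega⟩

theorem mem_rotatedBox_iff_l1_le (a b k : ℤ) (p : ℤ × ℤ) :
    p ∈ rotatedBox a b k ↔
      |((a + b + k : ℤ) : ℝ) / 2 - p.1| + |((a - b : ℤ) : ℝ) / 2 - p.2| ≤ (k : ℝ) / 2 := by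
  rw [abs_add_abs_le_iff, abs_le, abs_le]
  simp only [rotatedBox, Set.mem_ofPred_eq, Set.mem_Icc, ← Int.cast_le (R := ℝ), Int.cast_add,
    Int.cast_sub]
  constructor <;> rintro ⟨⟨h₁, h₂⟩, h₃, h₄⟩ <;> refine ⟨⟨?_, ?_⟩, ?_, ?_⟩ <;> linarith

theorem stmt0_general (k : ℤ) (σ : Finset (ℤ × ℤ)) (hσ : IsVRFacet dZ2 k σ) :
    ∃ c : ℝ × ℝ,
      (∃ m : ℤ, c.1 = m ∨ c.1 = m + 1 / 2) ∧
      (∃ m : ℤ, c.2 = m ∨ c.2 = m + 1 / 2) ∧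
      (↑σ : Set (ℤ × ℤ)) =
        {p : ℤ × ℤ | |c.1 - (p.1 : ℝ)| + |c.2 - (p.2 : ℝ)| ≤ (k : ℝ) / 2} := by
  obtain ⟨a, b, hσ_eq⟩ := hσ.exists_coe_eq_rotatedBox
  refine ⟨(((a + b + k : ℤ) : ℝ) / 2, ((a - b : ℤ) : ℝ) / 2), Int.exists_cast_div_two_eq _,
    Int.exists_cast_div_two_eq _, ?_⟩
  rw [hσ_eq]
  ext p
  exact mem_rotatedBox_iff_l1_le a b k p

theorem stmt0 (k : ℤ) (hk : 0 ≤ k) (σ : Finset (ℤ × ℤ)) (hσ : IsVRFacet dZ2 k σ) :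
    ∃ c : ℝ × ℝ,
      (∃ m : ℤ, c.1 = m ∨ c.1 = m + 1 / 2) ∧
      (∃ m : ℤ, c.2 = m ∨ c.2 = m + 1 / 2) ∧
      (↑σ : Set (ℤ × ℤ)) =
        {p : ℤ × ℤ | |c.1 - (p.1 : ℝ)| + |c.2 - (p.2 : ℝ)| ≤ (k : ℝ) / 2} :=
  stmt0_general k σ hσ
end

section
/- Let k ≥ 0 be an integer and let σ ⊆ ℤ² be a finite nonempty set. Then σ has ℓ¹ diameter at most k (i.e. σ is a simplex of VR(ℤ²;k)) if and only if the intersection of the open ℓ¹ balls ⋂_{v∈σ} B_{ℝ²}(v, (k+1)/2) in ℝ² is nonempty. -/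
section

variable {K : Type*} [Field K] [LinearOrder K] [IsStrictOrderedRing K]

theorem abs_add_abs_eq_max_abs_add_abs_sub (a b : K) : |a| + |b| = max |a + b| |a - b| := by
  refine le_antisymm ?_ (max_le (abs_add_le a b) (abs_sub a b))
  rw [le_max_iff, le_abs, le_abs]
  rcases abs_cases a with ⟨ha, -⟩ | ⟨ha, -⟩ <;> rcases abs_cases b with ⟨hb, -⟩ | ⟨hb, -⟩ <;>
    rw [ha, hb]
  · exact .inl (.inl le_rfl)
  · exact .inr (.inl (le_of_eq (sub_eq_add_neg a b).symm))
  · exact .inr (.inr (le_of_eq (by ring)))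
  · exact .inl (.inr (le_of_eq (by ring)))

theorem exists_forall_abs_sub_lt_iff {ι : Type*} (s : Finset ι) (f : ι → K) (r : K) :
    (∃ p, ∀ i ∈ s, |p - f i| < r) ↔ ∀ i ∈ s, ∀ j ∈ s, |f i - f j| < 2 * r := by
  constructor
  · rintro ⟨p, hp⟩ i hi j hj
    have hpi := hp i hi
    have hpj := hp j hj
    rw [abs_lt] at hpi hpj ⊢
    constructor <;> linarith
  · intro h
    rcases s.eq_empty_or_nonempty with rfl | hs
    · exact ⟨0, by simp⟩
    obtain ⟨i, hi, hmax⟩ := s.exists_mem_eq_sup' hs f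
    obtain ⟨j, hj, hmin⟩ := s.exists_mem_eq_inf' hs f
    have hspread := h i hi j hj
    refine ⟨(f i + f j) / 2, fun l hl => ?_⟩
    have hle : f l ≤ f i := hmax ▸ s.le_sup' f hl
    have hge : f j ≤ f l := hmin ▸ s.inf'_le f hl
    rw [abs_lt] at hspread ⊢
    constructor <;> linarith

theorem exists_forall_l1_lt_iff {ι : Type*} (s : Finset ι) (c : ι → K × K) (r : K) :
    (∃ p : K × K, ∀ i ∈ s, |p.1 - (c i).1| + |p.2 - (c i).2| < r) ↔
      ∀ i ∈ s, ∀ j ∈ s, |(c i).1 - (c j).1| + |(c i).2 - (c j).2| < 2 * r := by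
  let u i := (c i).1 + (c i).2
  let w i := (c i).1 - (c i).2
  have rotate (a b a' b' : K) (ρ : K) :
      |a - a'| + |b - b'| < ρ ↔ |(a + b) - (a' + b')| < ρ ∧ |(a - b) - (a' - b')| < ρ := by
    rw [abs_add_abs_eq_max_abs_add_abs_sub, max_lt_iff]
    constructor <;> rintro ⟨h₁, h₂⟩ <;> constructor <;> ring_nf at h₁ h₂ ⊢ <;> assumption
  simp only [rotate]
  constructor
  · rintro ⟨p, hp⟩ i hi j hj
    exact ⟨(exists_forall_abs_sub_lt_iff s u r).1 ⟨p.1 + p.2, fun l hl => (hp l hl).1⟩ i hi j hj,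
      (exists_forall_abs_sub_lt_iff s w r).1 ⟨p.1 - p.2, fun l hl => (hp l hl).2⟩ i hi j hj⟩
  · intro h
    obtain ⟨x, hx⟩ := (exists_forall_abs_sub_lt_iff s u r).2 fun i hi j hj => (h i hi j hj).1
    obtain ⟨y, hy⟩ := (exists_forall_abs_sub_lt_iff s w r).2 fun i hi j hj => (h i hi j hj).2
    refine ⟨((x + y) / 2, (x - y) / 2), fun i hi => ?_⟩
    have hsum : (x + y) / 2 + (x - y) / 2 = x := by ring
    have hdiff : (x + y) / 2 - (x - y) / 2 = y := by ring
    rw [hsum, hdiff]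
    exact ⟨hx i hi, hy i hi⟩

end

theorem stmt2_general (k : ℤ) (σ : Finset (ℤ × ℤ)) :
    (∀ x ∈ σ, ∀ y ∈ σ, dZ2 x y ≤ k) ↔
      (⋂ v ∈ σ,
        {p : ℝ × ℝ | |p.1 - ((v : ℤ × ℤ).1 : ℝ)| + |p.2 - ((v : ℤ × ℤ).2 : ℝ)|
          < ((k : ℝ) + 1) / 2}).Nonempty := by
  have hdist (x y : ℤ × ℤ) :
      dZ2 x y ≤ k ↔ |(x.1 : ℝ) - y.1| + |(x.2 : ℝ) - y.2| < 2 * (((k : ℝ) + 1) / 2) := by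
    rw [mul_div_cancel₀ _ two_ne_zero, ← Int.lt_add_one_iff, dZ2]
    exact_mod_cast Iff.rfl
  simp only [hdist, Set.Nonempty, Set.mem_iInter, Set.mem_ofPred_eq]
  exact (exists_forall_l1_lt_iff σ (fun v => ((v.1 : ℝ), (v.2 : ℝ))) _).symm

theorem stmt2 (k : ℤ) (hk : 0 ≤ k) (σ : Finset (ℤ × ℤ)) (hne : σ.Nonempty) :
    (∀ x ∈ σ, ∀ y ∈ σ, dZ2 x y ≤ k) ↔
      (⋂ v ∈ σ,
        {p : ℝ × ℝ | |p.1 - ((v : ℤ × ℤ).1 : ℝ)| + |p.2 - ((v : ℤ × ℤ).2 : ℝ)|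
          < ((k : ℝ) + 1) / 2}).Nonempty :=
  stmt2_general k σ
end

section
/- For every integer k ≥ 2, the geometric realization of the Vietoris–Rips complex VR(ℤ²;k), where ℤ² is equipped with the ℓ¹ metric, is contractible. -/
/-- The geometric realization of the abstract simplicial complex whose simplices are
(the nonempty subsets of) the members of `S`: the set of finitely supported probability
vectors on the vertex set whose support lies in some member of `S`, topologized as a
subspace of `V → ℝ`. -/
def Realization {V : Type*} (S : Set (Finset V)) : Set (V → ℝ) :=
  {f | ∃ σ ∈ S, (∀ v, v ∉ σ → f v = 0) ∧ (∀ v, 0 ≤ f v) ∧ σ.sum f = 1}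

/-!
For `n : ℕ` let `retractBall n : ℤ² → ℤ²` move a point one step towards the origin in each
nonzero coordinate until it lies in the `ℓ¹`-ball of radius `n`. For `k ≥ 2` these retractions
preserve `VR(ℤ²; k)`, and consecutive ones are contiguous: the images of a simplex under
`retractBall n` and `retractBall (n + 1)` together still form a simplex. Contiguous simplicial
maps are linearly homotopic in the realization, so running these homotopies on the intervals
`[1 / (n + 2), 1 / (n + 1)]` contracts the realization onto the vertex `0`, which is the image
of the constant map `retractBall 0`. At `t = 0` the homotopy is the identity; it is continuous
there because the complex is locally finite: near any point of the realization all supports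
lie in one finite set of vertices, which `retractBall n` fixes for large `n`.
-/

open Filter Finset

section Realization

variable {V : Type*}

def IsProbOn (σ : Finset V) (f : V → ℝ) : Prop :=
  (∀ v, v ∉ σ → f v = 0) ∧ (∀ v, 0 ≤ f v) ∧ σ.sum f = 1

theorem mem_realization_iff {S : Set (Finset V)} {f : V → ℝ} :
    f ∈ Realization S ↔ ∃ σ ∈ S, IsProbOn σ f :=
  Iff.rfl

theorem IsProbOn.lineMap {τ : Finset V} {g₀ g₁ : V → ℝ} (h₀ : IsProbOn τ g₀)
    (h₁ : IsProbOn τ g₁) {a : ℝ} (ha₀ : 0 ≤ a) (ha₁ : a ≤ 1) :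
    IsProbOn τ (fun v => g₀ v + a * (g₁ v - g₀ v)) := by
  obtain ⟨hs₀, hp₀, hsum₀⟩ := h₀
  obtain ⟨hs₁, hp₁, hsum₁⟩ := h₁
  refine ⟨fun v hv => by simp [hs₀ v hv, hs₁ v hv], fun v => ?_, ?_⟩
  · nlinarith [hp₀ v, hp₁ v]
  · simp only [sum_add_distrib, ← mul_sum, sum_sub_distrib, hsum₀, hsum₁]
    ring

theorem IsProbOn.single [DecidableEq V] (c : V) : IsProbOn {c} (Pi.single c 1) :=
  ⟨fun v hv => Pi.single_eq_of_ne (mem_singleton.not.1 hv) 1,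
    fun v => by by_cases h : v = c <;> simp [h], by simp⟩

variable [DecidableEq V]

noncomputable def pushforward (r : V → V) (f : V → ℝ) (v : V) : ℝ :=
  ∑' w, if r w = v then f w else 0

section Pushforward

variable {σ : Finset V} {f : V → ℝ} {r : V → V}

theorem pushforward_eq_sum (hf : ∀ w, w ∉ σ → f w = 0) (v : V) :
    pushforward r f v = ∑ w ∈ σ with r w = v, f w := by
  rw [sum_filter]
  exact tsum_eq_sum fun w hw => by simp [hf w hw]

theorem pushforward_eq_self (hf : ∀ w, w ∉ σ → f w = 0) (hr : ∀ w ∈ σ, r w = w) :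
    pushforward r f = f := by
  funext v
  rw [pushforward_eq_sum hf, sum_filter, sum_congr rfl fun w hw => by rw [hr w hw],
    sum_ite_eq']
  split_ifs with hv
  · rfl
  · exact (hf v hv).symm

theorem pushforward_const (hf : IsProbOn σ f) {c : V} (hr : ∀ w, r w = c) :
    pushforward r f = Pi.single c 1 := by
  funext v
  by_cases hv : v = c <;> simp [pushforward_eq_sum hf.1, hr, hv, Ne.symm, hf.2.2]

theorem IsProbOn.pushforward (hf : IsProbOn σ f) {τ : Finset V} (hτ : σ.image r ⊆ τ) :
    IsProbOn τ (pushforward r f) := by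
  obtain ⟨hs, hpos, hsum⟩ := hf
  refine ⟨fun v hv => ?_, fun v => ?_, ?_⟩
  · rw [pushforward_eq_sum hs]
    exact sum_eq_zero fun w hw =>
      absurd (hτ (mem_image.2 ⟨w, (mem_filter.1 hw).1, (mem_filter.1 hw).2⟩)) (by simpa using hv)
  · rw [pushforward_eq_sum hs]
    exact sum_nonneg fun w _ => hpos w
  · simp only [pushforward_eq_sum hs]
    rw [sum_fiberwise_of_maps_to (fun w hw => hτ (mem_image_of_mem r hw)), hsum]

end Pushforward

/-- The weight of the step from `r (n + 1)` to `r n` at time `t`: it rises linearly from `0`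
to `1` on `[1 / (n + 2), 1 / (n + 1)]`. -/
noncomputable def ramp (n : ℕ) (t : ℝ) : ℝ :=
  min 1 (max 0 ((n + 1) * ((n + 2) * t - 1)))

theorem ramp_nonneg (n : ℕ) (t : ℝ) : 0 ≤ ramp n t :=
  le_min zero_le_one (le_max_left _ _)

theorem ramp_le_one (n : ℕ) (t : ℝ) : ramp n t ≤ 1 :=
  min_le_left _ _

theorem ramp_eq_zero {n : ℕ} {t : ℝ} (h : (n + 2) * t ≤ 1) : ramp n t = 0 := by
  have : ((n : ℝ) + 1) * ((n + 2) * t - 1) ≤ 0 :=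
    mul_nonpos_of_nonneg_of_nonpos (by positivity) (by linarith)
  rw [ramp, max_eq_left this, min_eq_right zero_le_one]

theorem ramp_eq_one {n : ℕ} {t : ℝ} (h : 1 ≤ (n + 1) * t) : ramp n t = 1 := by
  have : 1 ≤ ((n : ℝ) + 1) * ((n + 2) * t - 1) := by nlinarith
  rw [ramp, max_eq_right (by linarith), min_eq_left this]

@[fun_prop]
theorem continuous_ramp (n : ℕ) : Continuous (ramp n) := by
  unfold ramp
  fun_prop

theorem exists_nat_mul_le_one_le_mul {t : ℝ} (ht₀ : 0 < t) (ht₁ : t ≤ 1) :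
    ∃ m : ℕ, (m + 1) * t ≤ 1 ∧ 1 ≤ (m + 2) * t := by
  obtain ⟨m, hm⟩ : ∃ m : ℕ, m + 1 = ⌊t⁻¹⌋₊ :=
    ⟨⌊t⁻¹⌋₊ - 1, Nat.sub_add_cancel (Nat.le_floor (by simpa using one_le_inv_iff₀.2 ⟨ht₀, ht₁⟩))⟩
  refine ⟨m, ?_, ?_⟩
  · have := Nat.floor_le (inv_nonneg.2 ht₀.le)
    rw [← hm] at this
    push_cast at this
    calc ((m : ℝ) + 1) * t ≤ t⁻¹ * t := by gcongr
      _ = 1 := inv_mul_cancel₀ ht₀.ne'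
  · have := Nat.lt_floor_add_one t⁻¹
    rw [← hm] at this
    push_cast at this
    calc (1 : ℝ) = t⁻¹ * t := (inv_mul_cancel₀ ht₀.ne').symm
      _ ≤ ((m : ℝ) + 2) * t := by gcongr; linarith

/-- On `[1 / (n + 2), 1 / (n + 1)]` the contraction interpolates linearly between the
pushforwards along `r (n + 1)` and `r n`; at `t = 0` it is the identity. -/
noncomputable def contraction (r : ℕ → V → V) (f : V → ℝ) (t : ℝ) (v : V) : ℝ :=
  f v + ∑' n, ramp n t * (pushforward (r n) f v - pushforward (r (n + 1)) f v)

section Contraction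

variable {r : ℕ → V → V} {σ : Finset V} {f : V → ℝ} {M : ℕ}

theorem contraction_eq_sum (hf : ∀ w, w ∉ σ → f w = 0) (hM : ∀ n ≥ M, ∀ w ∈ σ, r n w = w)
    (t : ℝ) (v : V) :
    contraction r f t v = f v + ∑ n ∈ range M,
      ramp n t * (pushforward (r n) f v - pushforward (r (n + 1)) f v) := by
  refine congrArg (f v + ·) (tsum_eq_sum fun n hn => ?_)
  have hn : M ≤ n := by simpa using hn
  rw [pushforward_eq_self hf (hM n hn), pushforward_eq_self hf (hM (n + 1) (by omega)), sub_self,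
    mul_zero]

theorem contraction_zero (f : V → ℝ) : contraction r f 0 = f := by
  funext v
  simp [contraction, ramp_eq_zero]

theorem contraction_eq_lineMap (hf : ∀ w, w ∉ σ → f w = 0) (hM : ∀ n ≥ M, ∀ w ∈ σ, r n w = w)
    {m : ℕ} {t : ℝ} (h₁ : (m + 1) * t ≤ 1) (h₂ : 1 ≤ (m + 2) * t) (v : V) :
    contraction r f t v = pushforward (r (m + 1)) f v +
      ramp m t * (pushforward (r m) f v - pushforward (r (m + 1)) f v) := by
  have hM' : ∀ n ≥ m + 1 + M, ∀ w ∈ σ, r n w = w := fun n hn => hM n (by omega)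
  have ht : 0 ≤ t := (pos_of_mul_pos_right (one_pos.trans_le h₂) (by positivity)).le
  set p := fun n => pushforward (r n) f v
  have hlow : ∑ n ∈ range m, ramp n t * (p n - p (n + 1)) = 0 :=
    sum_eq_zero fun n hn => by
      have hnm : (n : ℝ) + 1 ≤ m := by exact_mod_cast mem_range.1 hn
      have : ((n : ℝ) + 2) * t ≤ 1 :=
        le_trans (mul_le_mul_of_nonneg_right (by linarith) ht) h₁
      rw [ramp_eq_zero this, zero_mul]
  have hhigh : ∑ i ∈ range M, ramp (m + 1 + i) t * (p (m + 1 + i) - p (m + 1 + i + 1)) =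
      p (m + 1) - f v := by
    have : ∀ i ∈ range M, ramp (m + 1 + i) t = 1 := fun i _ =>
      ramp_eq_one (le_trans h₂ (mul_le_mul_of_nonneg_right
        (by push_cast; linarith [(i.cast_nonneg : (0 : ℝ) ≤ i)]) ht))
    have htel := sum_range_sub' (fun i => p (m + 1 + i)) M
    simp only [← add_assoc, add_zero] at htel
    rw [sum_congr rfl fun i hi => by rw [this i hi, one_mul], htel]
    simp only [p, pushforward_eq_self hf (hM' _ le_rfl)]
  rw [contraction_eq_sum hf hM', sum_range_add, sum_range_succ, hlow, hhigh]
  ring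

theorem contraction_one (hf : IsProbOn σ f) (hM : ∀ n ≥ M, ∀ w ∈ σ, r n w = w) {c : V}
    (hr : ∀ w, r 0 w = c) : contraction r f 1 = Pi.single c 1 := by
  funext v
  rw [contraction_eq_lineMap hf.1 hM (m := 0) (by norm_num) (by norm_num),
    ramp_eq_one (by norm_num), pushforward_const hf hr]
  ring

end Contraction

variable {S : Set (Finset V)} {r : ℕ → V → V}

omit [DecidableEq V] in
theorem exists_forall_ge_eqOn (hr : ∀ v, ∀ᶠ n in atTop, r n v = v) (σ : Finset V) :
    ∃ M, ∀ n ≥ M, ∀ w ∈ σ, r n w = w :=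
  eventually_atTop.1 ((eventually_all_finset σ).2 fun w _ => hr w)

theorem contraction_mem_realization
    (hS : ∀ σ ∈ S, ∀ n, σ.image (r n) ∪ σ.image (r (n + 1)) ∈ S)
    (hr : ∀ v, ∀ᶠ n in atTop, r n v = v) {f : V → ℝ} (hf : f ∈ Realization S) {t : ℝ}
    (ht : t ∈ unitInterval) : contraction r f t ∈ Realization S := by
  obtain ⟨σ, hσ, hfσ⟩ := mem_realization_iff.1 hf
  obtain rfl | ht₀ := ht.1.eq_or_lt
  · rw [contraction_zero]
    exact ⟨σ, hσ, hfσ⟩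
  obtain ⟨M, hM⟩ := exists_forall_ge_eqOn hr σ
  obtain ⟨m, h₁, h₂⟩ := exists_nat_mul_le_one_le_mul ht₀ ht.2
  refine ⟨_, hS σ hσ m, ?_⟩
  rw [show contraction r f t = _ from funext (contraction_eq_lineMap hfσ.1 hM h₁ h₂)]
  exact (hfσ.pushforward subset_union_right).lineMap (hfσ.pushforward subset_union_left)
    (ramp_nonneg m t) (ramp_le_one m t)

theorem eq_zero_of_notMem_of_pos {B : Finset V} {v : V} (hB : ∀ σ ∈ S, v ∈ σ → σ ⊆ B)
    {f : V → ℝ} (hf : f ∈ Realization S) (hv : 0 < f v) {w : V} (hw : w ∉ B) : f w = 0 := by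
  obtain ⟨σ, hσ, hs, -, -⟩ := hf
  have hvσ : v ∈ σ := by
    by_contra h
    exact hv.ne' (hs v h)
  exact hs w fun hwσ => hw (hB σ hσ hvσ hwσ)

/-- Near a point `f₀` of the realization, all points are supported in the finite set of
neighbours of a vertex where `f₀` is positive, so the contraction is locally a finite sum. -/
theorem continuous_contraction (hr : ∀ v, ∀ᶠ n in atTop, r n v = v)
    (hB : ∀ v, ∃ B : Finset V, ∀ σ ∈ S, v ∈ σ → σ ⊆ B) :
    Continuous fun z : Realization S × unitInterval => contraction r z.1 z.2 := by
  refine continuous_pi fun v => continuous_iff_continuousAt.2 fun z₀ => ?_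
  obtain ⟨σ₀, -, -, hpos₀, hsum₀⟩ := z₀.1.2
  obtain ⟨v₀, -, hv₀⟩ := exists_ne_zero_of_sum_ne_zero (hsum₀.trans_ne one_ne_zero)
  obtain ⟨B, hB⟩ := hB v₀
  obtain ⟨M, hM⟩ := exists_forall_ge_eqOn hr B
  have hval : ∀ w, Continuous fun z : Realization S × unitInterval => (z.1 : V → ℝ) w :=
    fun w => (continuous_apply w).comp (continuous_subtype_val.comp continuous_fst)
  have hopen : IsOpen {z : Realization S × unitInterval | 0 < (z.1 : V → ℝ) v₀} :=
    isOpen_lt continuous_const (hval v₀)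
  have hz₀ : 0 < (z₀.1 : V → ℝ) v₀ := (hpos₀ v₀).lt_of_ne' hv₀
  refine ContinuousAt.congr (f := fun z : Realization S × unitInterval =>
      (z.1 : V → ℝ) v + ∑ n ∈ range M, ramp n z.2 *
        (∑ w ∈ B with r n w = v, (z.1 : V → ℝ) w - ∑ w ∈ B with r (n + 1) w = v, (z.1 : V → ℝ) w))
    (by fun_prop : Continuous _).continuousAt
    (eventuallyEq_of_mem (hopen.mem_nhds hz₀) fun z hz => ?_)
  have hzB : ∀ w, w ∉ B → (z.1 : V → ℝ) w = 0 := fun w hw =>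
    eq_zero_of_notMem_of_pos hB z.1.2 hz hw
  simp only [contraction_eq_sum hzB hM, pushforward_eq_sum hzB]

theorem contractibleSpace_realization (c : V) (hc : {c} ∈ S) (hr₀ : ∀ v, r 0 v = c)
    (hS : ∀ σ ∈ S, ∀ n, σ.image (r n) ∪ σ.image (r (n + 1)) ∈ S)
    (hr : ∀ v, ∀ᶠ n in atTop, r n v = v)
    (hB : ∀ v, ∃ B : Finset V, ∀ σ ∈ S, v ∈ σ → σ ⊆ B) :
    ContractibleSpace (Realization S) := by
  rw [contractible_iff_id_nullhomotopic]
  refine ⟨⟨Pi.single c 1, {c}, hc, IsProbOn.single c⟩, ⟨?_⟩⟩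
  exact
    { toFun := fun z => ⟨contraction r z.2 z.1, contraction_mem_realization hS hr z.2.2 z.1.2⟩
      continuous_toFun :=
        ((continuous_contraction hr hB).comp continuous_swap).subtype_mk _
      map_zero_left := fun f => Subtype.ext (contraction_zero (r := r) f.1)
      map_one_left := fun f => by
        obtain ⟨σ, -, hfσ⟩ := mem_realization_iff.1 f.2
        obtain ⟨M, hM⟩ := exists_forall_ge_eqOn hr σ
        exact Subtype.ext (contraction_one hfσ hM hr₀) }

end Realization

theorem IsVRSimplex.image_union {V W : Type*} [DecidableEq W] {d : V → V → ℤ} {e : W → W → ℤ}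
    {k : ℤ} {σ : Finset V} (hσ : IsVRSimplex d k σ) (he : ∀ a b, e a b = e b a) {f g : V → W}
    (hf : ∀ x y, d x y ≤ k → e (f x) (f y) ≤ k) (hg : ∀ x y, d x y ≤ k → e (g x) (g y) ≤ k)
    (hfg : ∀ x y, d x y ≤ k → e (f x) (g y) ≤ k) :
    IsVRSimplex e k (σ.image f ∪ σ.image g) := by
  refine ⟨(hσ.1.image f).mono subset_union_left, fun a ha b hb => ?_⟩
  simp only [mem_union, mem_image] at ha hb
  obtain ⟨x, hx, rfl⟩ | ⟨x, hx, rfl⟩ := ha <;> obtain ⟨y, hy, rfl⟩ | ⟨y, hy, rfl⟩ := hb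
  · exact hf x y (hσ.2 x hx y hy)
  · exact hfg x y (hσ.2 x hx y hy)
  · exact he _ _ ▸ hfg y x (hσ.2 y hy x hx)
  · exact hg x y (hσ.2 x hx y hy)

theorem dZ2_comm (x y : ℤ × ℤ) : dZ2 x y = dZ2 y x := by
  simp only [dZ2, abs_sub_comm]

theorem IsVRSimplex.subset_Icc {k : ℤ} {σ : Finset (ℤ × ℤ)} (hσ : IsVRSimplex dZ2 k σ)
    {v : ℤ × ℤ} (hv : v ∈ σ) : σ ⊆ Icc (v - (k, k)) (v + (k, k)) := fun w hw => by
  have := hσ.2 w hw v hv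
  simp only [dZ2, Int.abs_eq_natAbs] at this
  simp only [mem_Icc, Prod.le_def, Prod.fst_sub, Prod.snd_sub, Prod.fst_add, Prod.snd_add]
  omega

def normL1 (v : ℤ × ℤ) : ℕ := v.1.natAbs + v.2.natAbs

def stepToOrigin (v : ℤ × ℤ) : ℤ × ℤ := (v.1 - v.1.sign, v.2 - v.2.sign)

theorem Int.sign_cases (a : ℤ) :
    (0 < a ∧ a.sign = 1) ∨ (a = 0 ∧ a.sign = 0) ∨ (a < 0 ∧ a.sign = -1) := by
  rcases lt_trichotomy a 0 with h | rfl | h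
  · exact .inr (.inr ⟨h, Int.sign_eq_neg_one_of_neg h⟩)
  · simp
  · exact .inl ⟨h, Int.sign_eq_one_of_pos h⟩

theorem normL1_stepToOrigin_lt {v : ℤ × ℤ} (h : normL1 v ≠ 0) :
    normL1 (stepToOrigin v) < normL1 v := by
  have := v.1.sign_cases
  have := v.2.sign_cases
  simp only [normL1, stepToOrigin] at *
  omega

theorem dZ2_stepToOrigin_le {k : ℤ} (hk : 2 ≤ k) {x y : ℤ × ℤ} (hn : normL1 y ≤ normL1 x)
    (hd : dZ2 x y ≤ k) : dZ2 (stepToOrigin x) y ≤ k := by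
  have := x.1.sign_cases
  have := x.2.sign_cases
  simp only [dZ2, stepToOrigin, normL1, Int.abs_eq_natAbs] at *
  omega

theorem dZ2_stepToOrigin_stepToOrigin_le (x y : ℤ × ℤ) :
    dZ2 (stepToOrigin x) (stepToOrigin y) ≤ dZ2 x y := by
  have := x.1.sign_cases
  have := x.2.sign_cases
  have := y.1.sign_cases
  have := y.2.sign_cases
  simp only [dZ2, stepToOrigin, Int.abs_eq_natAbs]
  omega

def retractBall (n : ℕ) (v : ℤ × ℤ) : ℤ × ℤ :=
  if normL1 v ≤ n then v else retractBall n (stepToOrigin v)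
termination_by normL1 v
decreasing_by exact normL1_stepToOrigin_lt (by omega)

theorem retractBall_of_le {n : ℕ} {v : ℤ × ℤ} (h : normL1 v ≤ n) : retractBall n v = v := by
  rw [retractBall, if_pos h]

theorem retractBall_of_lt {n : ℕ} {v : ℤ × ℤ} (h : n < normL1 v) :
    retractBall n v = retractBall n (stepToOrigin v) := by
  rw [retractBall, if_neg h.not_ge]

theorem normL1_retractBall_le (n : ℕ) (v : ℤ × ℤ) : normL1 (retractBall n v) ≤ n := by
  obtain h | h := le_or_gt (normL1 v) n
  · rwa [retractBall_of_le h]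
  · rw [retractBall_of_lt h]
    exact normL1_retractBall_le n (stepToOrigin v)
termination_by normL1 v
decreasing_by exact normL1_stepToOrigin_lt (by omega)

theorem retractBall_zero (v : ℤ × ℤ) : retractBall 0 v = (0, 0) := by
  have := normL1_retractBall_le 0 v
  simp only [normL1, nonpos_iff_eq_zero, Nat.add_eq_zero_iff, Int.natAbs_eq_zero] at this
  exact Prod.ext this.1 this.2

theorem retractBall_retractBall {m n : ℕ} (h : m ≤ n) (v : ℤ × ℤ) :
    retractBall m (retractBall n v) = retractBall m v := by
  obtain hv | hv := le_or_gt (normL1 v) n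
  · rw [retractBall_of_le hv]
  · rw [retractBall_of_lt hv, retractBall_of_lt (h.trans_lt hv)]
    exact retractBall_retractBall h (stepToOrigin v)
termination_by normL1 v
decreasing_by exact normL1_stepToOrigin_lt (by omega)

theorem retractBall_of_le_succ {n : ℕ} {v : ℤ × ℤ} (h : normL1 v ≤ n + 1) :
    retractBall n v = if normL1 v ≤ n then v else stepToOrigin v := by
  split_ifs with hn
  · exact retractBall_of_le hn
  · rw [retractBall_of_lt (by omega), retractBall_of_le]
    have := normL1_stepToOrigin_lt (v := v) (by omega)
    omega

section Contiguity

variable {k : ℤ} (hk : 2 ≤ k) {n : ℕ} {x y : ℤ × ℤ}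
include hk

theorem dZ2_retractBall_left_le (hx : normL1 x ≤ n + 1) (hy : normL1 y ≤ n + 1)
    (hd : dZ2 x y ≤ k) : dZ2 (retractBall n x) y ≤ k := by
  rw [retractBall_of_le_succ hx]
  split_ifs
  · exact hd
  · exact dZ2_stepToOrigin_le hk (by omega) hd

theorem dZ2_retractBall_retractBall_le_of_le_succ (hx : normL1 x ≤ n + 1)
    (hy : normL1 y ≤ n + 1) (hd : dZ2 x y ≤ k) :
    dZ2 (retractBall n x) (retractBall n y) ≤ k := by
  rw [retractBall_of_le_succ hx, retractBall_of_le_succ hy]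
  split_ifs with hxn hyn hyn
  · exact hd
  · rw [dZ2_comm] at hd ⊢
    exact dZ2_stepToOrigin_le hk (by omega) hd
  · exact dZ2_stepToOrigin_le hk (by omega) hd
  · exact (dZ2_stepToOrigin_stepToOrigin_le x y).trans hd

theorem dZ2_retractBall_le (hd : dZ2 x y ≤ k) (n : ℕ) :
    dZ2 (retractBall n x) (retractBall n y) ≤ k := by
  obtain ⟨N, hnN, hxN, hyN⟩ : ∃ N, n ≤ N ∧ normL1 x ≤ N ∧ normL1 y ≤ N :=
    ⟨n + normL1 x + normL1 y, by omega, by omega, by omega⟩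
  induction hnN using Nat.decreasingInduction with
  | self => rwa [retractBall_of_le hxN, retractBall_of_le hyN]
  | of_succ n _ ih =>
    rw [← retractBall_retractBall n.le_succ x, ← retractBall_retractBall n.le_succ y]
    exact dZ2_retractBall_retractBall_le_of_le_succ hk (normL1_retractBall_le _ _)
      (normL1_retractBall_le _ _) ih

theorem dZ2_retractBall_retractBall_succ_le (hd : dZ2 x y ≤ k) (n : ℕ) :
    dZ2 (retractBall n x) (retractBall (n + 1) y) ≤ k := by
  rw [← retractBall_retractBall n.le_succ x]
  exact dZ2_retractBall_left_le hk (normL1_retractBall_le _ _) (normL1_retractBall_le _ _)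
    (dZ2_retractBall_le hk hd (n + 1))

end Contiguity

theorem stmt3 (k : ℤ) (hk : 2 ≤ k) :
    ContractibleSpace ↥(Realization {σ : Finset (ℤ × ℤ) | IsVRSimplex dZ2 k σ}) := by
  refine contractibleSpace_realization (r := retractBall) (0, 0) ?_ retractBall_zero ?_ ?_ ?_
  · refine ⟨singleton_nonempty _, fun x hx y hy => ?_⟩
    simp only [mem_singleton] at hx hy
    simp only [hx, hy, dZ2, sub_self, abs_zero, add_zero]
    omega
  · exact fun σ hσ n => hσ.image_union dZ2_comm (fun _ _ hd => dZ2_retractBall_le hk hd n)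
      (fun _ _ hd => dZ2_retractBall_le hk hd (n + 1))
      (fun _ _ hd => dZ2_retractBall_retractBall_succ_le hk hd n)
  · exact fun v => eventually_atTop.2 ⟨normL1 v, fun n hn => retractBall_of_le hn⟩
  · exact fun v => ⟨_, fun _ hσ hv => hσ.subset_Icc hv⟩
end

section
/- Fix integers k ≥ 0, n ≥ 1 and distinct points x = (x₁,x₂), y = (y₁,y₂) in ℤ². If |x₁ − y₁| < n − 2k and |x₂ − y₂| < n − 2k, then π_n(B_{ℤ²}[x,k] ∩ B_{ℤ²}[y,k]) = π_n(B_{ℤ²}[x,k]) ∩ π_n(B_{ℤ²}[y,k]). -/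
/-- The quotient map `π_n : ℤ² → ℤ²/G_n`, where `G_n = nℤ × nℤ` and the quotient
is realized as `ZMod n × ZMod n`. -/
def proj (n : ℕ) (x : ℤ × ℤ) : ZMod n × ZMod n := ((x.1 : ZMod n), (x.2 : ZMod n))

/-- The closed ball `B_{ℤ²}[x, k]` in `ℤ²` with the ℓ¹ metric. -/
def ballZ2 (x : ℤ × ℤ) (k : ℤ) : Set (ℤ × ℤ) := {z | dZ2 x z ≤ k}

/-!
Two points of ℤ² with the same image under `π_n` differ by a vector of `nℤ × nℤ`. If one lies
in `B[x, k]` and the other in `B[y, k]`, each coordinate of their difference has absolute value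
less than `k + (n - 2k) + k = n`, so the difference is zero. Hence `π_n` is injective across the
two balls, and the image of the intersection is the intersection of the images.
-/

lemma Int.eq_of_intCast_eq_of_abs_sub_lt {n : ℕ} {a b : ℤ} (h : (a : ZMod n) = b)
    (hab : |a - b| < n) : a = b :=
  sub_eq_zero.mp <|
    Int.eq_zero_of_abs_lt_dvd ((ZMod.intCast_eq_intCast_iff_dvd_sub b a n).mp h.symm) hab

lemma abs_sub_le_add_abs_sub_add_of_abs_sub_le {α : Type*} [AddCommGroup α] [LinearOrder α]
    [IsOrderedAddMonoid α] {a b x y k : α} (ha : |x - a| ≤ k) (hb : |y - b| ≤ k) :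
    |a - b| ≤ k + |x - y| + k := by
  calc |a - b| ≤ |a - x| + |x - y| + |y - b| :=
        (abs_sub_le a y b).trans (add_le_add_left (abs_sub_le a x y) _)
    _ ≤ k + |x - y| + k := by rw [abs_sub_comm a x]; gcongr

lemma abs_fst_sub_le_dZ2 (x z : ℤ × ℤ) : |x.1 - z.1| ≤ dZ2 x z :=
  le_add_of_nonneg_right (abs_nonneg _)

lemma abs_snd_sub_le_dZ2 (x z : ℤ × ℤ) : |x.2 - z.2| ≤ dZ2 x z :=
  le_add_of_nonneg_left (abs_nonneg _)

lemma eq_of_proj_eq_of_mem_ballZ2 {n : ℕ} {k : ℤ} {x y a b : ℤ × ℤ}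
    (h1 : |x.1 - y.1| < (n : ℤ) - 2 * k) (h2 : |x.2 - y.2| < (n : ℤ) - 2 * k)
    (ha : a ∈ ballZ2 x k) (hb : b ∈ ballZ2 y k) (hab : proj n a = proj n b) : a = b := by
  have hfst := abs_sub_le_add_abs_sub_add_of_abs_sub_le ((abs_fst_sub_le_dZ2 x a).trans ha)
    ((abs_fst_sub_le_dZ2 y b).trans hb)
  have hsnd := abs_sub_le_add_abs_sub_add_of_abs_sub_le ((abs_snd_sub_le_dZ2 x a).trans ha)
    ((abs_snd_sub_le_dZ2 y b).trans hb)
  exact Prod.ext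
    (Int.eq_of_intCast_eq_of_abs_sub_lt (congrArg Prod.fst hab) (by linarith))
    (Int.eq_of_intCast_eq_of_abs_sub_lt (congrArg Prod.snd hab) (by linarith))

theorem stmt7_general (k : ℤ) (n : ℕ)
    (x y : ℤ × ℤ)
    (h1 : |x.1 - y.1| < (n : ℤ) - 2 * k) (h2 : |x.2 - y.2| < (n : ℤ) - 2 * k) :
    proj n '' (ballZ2 x k ∩ ballZ2 y k)
      = proj n '' ballZ2 x k ∩ proj n '' ballZ2 y k :=
  Set.image_inter_on fun _b hb _a ha hba =>
    (eq_of_proj_eq_of_mem_ballZ2 h1 h2 ha hb hba.symm).symm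

theorem stmt7 (k : ℤ) (n : ℕ) (hk : 0 ≤ k) (hn : 1 ≤ n)
    (x y : ℤ × ℤ) (hxy : x ≠ y)
    (h1 : |x.1 - y.1| < (n : ℤ) - 2 * k) (h2 : |x.2 - y.2| < (n : ℤ) - 2 * k) :
    proj n '' (ballZ2 x k ∩ ballZ2 y k)
      = proj n '' ballZ2 x k ∩ proj n '' ballZ2 y k :=
  stmt7_general k n x y h1 h2
end

section
/- For all integers k ≥ 1 and n > 3k, the set of facets of the Vietoris–Rips complex VR(T_{n,n};k) is exactly M_{n,k} = {π_n(σ) : σ a facet of VR(ℤ²;k)}. -/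
/-- The circular metric on `ZMod n` (shortest-path metric of the cycle graph `C_n`). -/
def cZdist (n : ℕ) (x y : ZMod n) : ℤ := min ((x - y).val : ℤ) ((y - x).val : ℤ)

/-- The ℓ¹ (quotient) metric on the `n × n` torus grid `T_{n,n} = ℤ²/G_n`,
realized on `ZMod n × ZMod n`. -/
def tdist (n : ℕ) (x y : ZMod n × ZMod n) : ℤ := cZdist n x.1 y.1 + cZdist n x.2 y.2

/-- `M_{n,k}`: the images under `π_n` of the facets of `VR(ℤ²; k)`. -/
def Mfacets (n : ℕ) (k : ℤ) : Set (Finset (ZMod n × ZMod n)) :=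
  {τ | ∃ σ : Finset (ℤ × ℤ), IsVRFacet dZ2 k σ ∧ τ = σ.image (proj n)}

section VietorisRips

variable {V W : Type*} {d : V → V → ℤ} {k : ℤ} {σ : Finset V}

lemma IsVRSimplex.zero_le (hd : ∀ x, d x x = 0) (h : IsVRSimplex d k σ) : 0 ≤ k := by
  obtain ⟨x, hx⟩ := h.1
  simpa [hd] using h.2 x hx x hx

lemma IsVRSimplex.image [DecidableEq W] {d' : W → W → ℤ} (f : V → W)
    (hf : ∀ x ∈ σ, ∀ y ∈ σ, d' (f x) (f y) ≤ d x y) (h : IsVRSimplex d k σ) :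
    IsVRSimplex d' k (σ.image f) := by
  refine ⟨h.1.image f, ?_⟩
  simp only [Finset.mem_image, forall_exists_index, and_imp, forall_apply_eq_imp_iff₂]
  exact fun x hx y hy => (hf x hx y hy).trans (h.2 x hx y hy)

lemma exists_isVRFacet_superset (hfin : ∀ p, {x | d x p ≤ k}.Finite)
    (h : IsVRSimplex d k σ) : ∃ τ, IsVRFacet d k τ ∧ σ ⊆ τ := by
  obtain ⟨p, hp⟩ := h.1
  set S := {τ : Finset V | IsVRSimplex d k τ ∧ σ ⊆ τ}
  have hS : S.Finite := by
    refine ((hfin p).toFinset.powerset.finite_toSet).subset fun τ hτ => ?_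
    simp only [Finset.coe_powerset, Set.mem_preimage, Set.mem_powerset_iff, Finset.coe_subset]
    exact fun x hx => (hfin p).mem_toFinset.2 (hτ.1.2 x hx p (hτ.2 hp))
  obtain ⟨τ, ⟨hτ, hστ⟩, hmax⟩ := hS.exists_maximal ⟨σ, h, subset_rfl⟩
  exact ⟨τ, ⟨hτ, fun τ' hτ' hττ' => le_antisymm hττ' (hmax ⟨hτ', hστ.trans hττ'⟩ hττ')⟩, hστ⟩

end VietorisRips

section Circle

variable {n : ℕ} {k : ℤ}

lemma cZdist_nonneg (x y : ZMod n) : 0 ≤ cZdist n x y :=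
  le_min (Int.natCast_nonneg _) (Int.natCast_nonneg _)

lemma cZdist_eq_abs_valMinAbs [NeZero n] (x y : ZMod n) :
    cZdist n x y = |(x - y).valMinAbs| := by
  rw [Int.abs_eq_natAbs, ZMod.valMinAbs_natAbs_eq_min, cZdist, ← neg_sub x y, ZMod.neg_val]
  split_ifs with h
  · simp [h]
  · have := (x - y).val_lt
    omega

lemma cZdist_intCast_le [NeZero n] (a b : ℤ) : cZdist n a b ≤ |a - b| := by
  rw [cZdist_eq_abs_valMinAbs, Int.abs_eq_natAbs, Int.abs_eq_natAbs, Nat.cast_le]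
  exact ZMod.natAbs_min_of_le_div_two n _ _ (by push_cast [ZMod.coe_valMinAbs]; rfl)
    (ZMod.natAbs_valMinAbs_le _)

/-- The integer representative of `t` closest to `b`. -/
def liftNear (n : ℕ) (b : ℤ) (t : ZMod n) : ℤ := b + (t - b).valMinAbs

lemma intCast_liftNear (b : ℤ) (t : ZMod n) : (liftNear n b t : ZMod n) = t := by
  simp [liftNear, ZMod.coe_valMinAbs]

lemma liftNear_intCast [NeZero n] {b x : ℤ} (h : 2 * |x - b| < n) : liftNear n b x = x := by
  have hx : ((x - b : ℤ) : ZMod n).valMinAbs = x - b := by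
    rw [ZMod.valMinAbs_spec]
    refine ⟨rfl, ?_, ?_⟩ <;> cases abs_cases (x - b) <;> omega
  rw [liftNear, ← Int.cast_sub, hx]
  ring

lemma abs_liftNear_sub_liftNear [NeZero n] (hn : 3 * k < n) {b : ℤ} {s t : ZMod n}
    (hs : cZdist n s b ≤ k) (ht : cZdist n t b ≤ k) (hst : cZdist n s t ≤ k) :
    |liftNear n b s - liftNear n b t| = cZdist n s t := by
  rw [cZdist_eq_abs_valMinAbs] at hs ht hst ⊢
  -- both sides are congruent mod `n` and differ by at most `3 k`
  have hdvd : (n : ℤ) ∣ (s - b).valMinAbs - (t - b).valMinAbs - (s - t).valMinAbs := by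
    rw [← ZMod.intCast_zmod_eq_zero_iff_dvd]
    push_cast [ZMod.coe_valMinAbs]
    ring
  have hlt : |(s - b).valMinAbs - (t - b).valMinAbs - (s - t).valMinAbs| < n := by
    rw [abs_lt]; constructor <;> linarith [abs_le.1 hs, abs_le.1 ht, abs_le.1 hst]
  have := Int.eq_zero_of_abs_lt_dvd hdvd hlt
  rw [liftNear, liftNear, add_sub_add_left_eq_sub, sub_eq_zero.1 this]

end Circle

section Torus

variable {n : ℕ} {k : ℤ}

lemma cZdist_fst_le_tdist (s t : ZMod n × ZMod n) : cZdist n s.1 t.1 ≤ tdist n s t :=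
  le_add_of_nonneg_right (cZdist_nonneg _ _)

lemma cZdist_snd_le_tdist (s t : ZMod n × ZMod n) : cZdist n s.2 t.2 ≤ tdist n s t :=
  le_add_of_nonneg_left (cZdist_nonneg _ _)

lemma tdist_self (s : ZMod n × ZMod n) : tdist n s s = 0 := by
  simp [tdist, cZdist]

lemma dZ2_self (x : ℤ × ℤ) : dZ2 x x = 0 := by
  simp [dZ2]

lemma tdist_proj_le [NeZero n] (x y : ℤ × ℤ) : tdist n (proj n x) (proj n y) ≤ dZ2 x y :=
  add_le_add (cZdist_intCast_le _ _) (cZdist_intCast_le _ _)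

def torusLift (n : ℕ) (b : ℤ × ℤ) (t : ZMod n × ZMod n) : ℤ × ℤ :=
  (liftNear n b.1 t.1, liftNear n b.2 t.2)

lemma proj_torusLift (b : ℤ × ℤ) (t : ZMod n × ZMod n) : proj n (torusLift n b t) = t := by
  simp [proj, torusLift, intCast_liftNear]

lemma proj_surjective : Function.Surjective (proj n) :=
  fun t => ⟨torusLift n 0 t, proj_torusLift 0 t⟩

lemma torusLift_proj [NeZero n] {b x : ℤ × ℤ} (h : 2 * dZ2 x b < n) :
    torusLift n b (proj n x) = x := by
  have h₁ := abs_nonneg (x.1 - b.1)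
  have h₂ := abs_nonneg (x.2 - b.2)
  rw [dZ2] at h
  simp only [torusLift, proj, liftNear_intCast (by omega : 2 * |x.1 - b.1| < n),
    liftNear_intCast (by omega : 2 * |x.2 - b.2| < n)]

lemma dZ2_torusLift [NeZero n] (hn : 3 * k < n) {b : ℤ × ℤ} {s t : ZMod n × ZMod n}
    (hs : tdist n s (proj n b) ≤ k) (ht : tdist n t (proj n b) ≤ k) (hst : tdist n s t ≤ k) :
    dZ2 (torusLift n b s) (torusLift n b t) = tdist n s t := by
  rw [dZ2, tdist, torusLift, torusLift,
    abs_liftNear_sub_liftNear hn ((cZdist_fst_le_tdist _ _).trans hs)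
      ((cZdist_fst_le_tdist _ _).trans ht) ((cZdist_fst_le_tdist _ _).trans hst),
    abs_liftNear_sub_liftNear hn ((cZdist_snd_le_tdist _ _).trans hs)
      ((cZdist_snd_le_tdist _ _).trans ht) ((cZdist_snd_le_tdist _ _).trans hst)]

lemma image_proj_image_torusLift (b : ℤ × ℤ) (τ : Finset (ZMod n × ZMod n)) :
    (τ.image (torusLift n b)).image (proj n) = τ := by
  simp [Finset.image_image, Function.comp_def, proj_torusLift]

lemma finite_setOf_dZ2_le (k : ℤ) (p : ℤ × ℤ) : {x | dZ2 x p ≤ k}.Finite := by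
  refine (Set.finite_Icc (p - (k, k)) (p + (k, k))).subset fun x hx => ?_
  have h₁ := abs_le.1 ((le_add_of_nonneg_right (abs_nonneg (x.2 - p.2))).trans hx)
  have h₂ := abs_le.1 ((le_add_of_nonneg_left (abs_nonneg (x.1 - p.1))).trans hx)
  simp only [Set.mem_Icc, Prod.le_def, Prod.fst_sub, Prod.snd_sub, Prod.fst_add, Prod.snd_add]
  omega

lemma IsVRSimplex.image_proj [NeZero n] {σ : Finset (ℤ × ℤ)} (h : IsVRSimplex dZ2 k σ) :
    IsVRSimplex (tdist n) k (σ.image (proj n)) :=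
  h.image _ fun x _ y _ => tdist_proj_le x y

lemma IsVRSimplex.image_torusLift [NeZero n] (hn : 3 * k < n) {b : ℤ × ℤ}
    {τ : Finset (ZMod n × ZMod n)} (h : IsVRSimplex (tdist n) k τ) (hb : proj n b ∈ τ) :
    IsVRSimplex dZ2 k (τ.image (torusLift n b)) :=
  h.image _ fun s hs t ht =>
    (dZ2_torusLift hn (h.2 s hs _ hb) (h.2 t ht _ hb) (h.2 s hs t ht)).le

lemma IsVRFacet.image_proj (hn : 3 * k < n) {σ : Finset (ℤ × ℤ)}
    (hσ : IsVRFacet dZ2 k σ) : IsVRFacet (tdist n) k (σ.image (proj n)) := by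
  have hk := hσ.1.zero_le dZ2_self
  have : NeZero n := ⟨by omega⟩
  refine ⟨hσ.1.image_proj, fun τ hτ hστ => ?_⟩
  obtain ⟨p, hp⟩ := hσ.1.1
  have hpτ : proj n p ∈ τ := hστ (Finset.mem_image_of_mem _ hp)
  -- near `p` the lift of `τ` is a simplex of `ℤ²` containing `σ`, hence equal to it
  have hσ_sub : σ ⊆ τ.image (torusLift n p) := fun x hx =>
    Finset.mem_image.2 ⟨proj n x, hστ (Finset.mem_image_of_mem _ hx),
      torusLift_proj (by linarith [hσ.1.2 x hx p hp])⟩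
  rw [hσ.2 _ (hτ.image_torusLift hn hpτ) hσ_sub, image_proj_image_torusLift]

lemma IsVRFacet.exists_eq_image_proj (hn : 3 * k < n)
    {τ : Finset (ZMod n × ZMod n)} (hτ : IsVRFacet (tdist n) k τ) :
    ∃ σ, IsVRFacet dZ2 k σ ∧ τ = σ.image (proj n) := by
  have hk := hτ.1.zero_le tdist_self
  have : NeZero n := ⟨by omega⟩
  obtain ⟨t, ht⟩ := hτ.1.1
  obtain ⟨b, rfl⟩ := proj_surjective t
  obtain ⟨σ, hσ, hsub⟩ :=
    exists_isVRFacet_superset (finite_setOf_dZ2_le k) (hτ.1.image_torusLift hn ht)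
  refine ⟨σ, hσ, hτ.2 _ hσ.1.image_proj ?_⟩
  calc τ = (τ.image (torusLift n b)).image (proj n) := (image_proj_image_torusLift b τ).symm
    _ ⊆ σ.image (proj n) := Finset.image_subset_image hsub

end Torus

theorem stmt10_general (k : ℤ) (n : ℕ) (hn : 3 * k < (n : ℤ))
    (τ : Finset (ZMod n × ZMod n)) :
    IsVRFacet (tdist n) k τ ↔ τ ∈ Mfacets n k := by
  constructor
  · exact IsVRFacet.exists_eq_image_proj hn
  · rintro ⟨σ, hσ, rfl⟩
    exact hσ.image_proj hn

theorem stmt10 (k : ℤ) (n : ℕ) (hk : 1 ≤ k) (hn : 3 * k < (n : ℤ))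
    (τ : Finset (ZMod n × ZMod n)) :
    IsVRFacet (tdist n) k τ ↔ τ ∈ Mfacets n k :=
  stmt10_general k n hn τ
end

section
/- Let n ≥ 2 be even. Then the geometric realization of the Vietoris–Rips complex VR(T_{n,n}; n−1) is homeomorphic to the sphere S^{n²/2 − 1}. (Note diam(T_{n,n}) = n when n is even, so this is the scale one below the diameter.) -/
/-!
Write `n = 2m`. On the torus grid `d(u, v) ≤ n`, with equality exactly when `v = u + (m, m)` is
the antipode of `u`. So the simplices of `VR(T_{n,n}; n - 1)` are the nonempty sets containing no
antipodal pair: this is the boundary of the cross-polytope whose `n²/2` axes are the antipodal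
pairs. Choosing one point `p` from each pair, `f ↦ (f p - f (p + (m, m)))_p` identifies its
realization with the `ℓ¹` unit sphere of `ℝ^{n²/2}`, and radial projection carries that onto
the Euclidean unit sphere.
-/

open Function

section CrossPolytope

variable {V : Type*}

def crossPolytopeBoundary (ι : V → V) : Set (Finset V) :=
  {σ | σ.Nonempty ∧ ∀ v ∈ σ, ι v ∉ σ}

lemma mem_realization_crossPolytopeBoundary_iff [Fintype V] {ι : V → V} {f : V → ℝ} :
    f ∈ Realization (crossPolytopeBoundary ι) ↔
      (∀ v, 0 ≤ f v) ∧ (∀ v, f v = 0 ∨ f (ι v) = 0) ∧ ∑ v, f v = 1 := by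
  classical
  constructor
  · rintro ⟨σ, ⟨-, hσ⟩, hzero, hpos, hsum⟩
    refine ⟨hpos, fun v => ?_, ?_⟩
    · by_contra! h
      exact hσ v (not_imp_comm.1 (hzero v) h.1) (not_imp_comm.1 (hzero _) h.2)
    · rw [← hsum, Finset.sum_subset (Finset.subset_univ σ) fun v _ hv => hzero v hv]
  · rintro ⟨hpos, horth, hsum⟩
    have hsupp : ∑ v ∈ Finset.univ.filter (f · ≠ 0), f v = 1 := by
      rw [Finset.sum_filter_ne_zero, hsum]
    refine ⟨Finset.univ.filter (f · ≠ 0), ⟨?_, ?_⟩, fun v hv => ?_, hpos, hsupp⟩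
    · exact Finset.nonempty_of_sum_ne_zero (hsupp ▸ one_ne_zero)
    · simp only [Finset.mem_filter, Finset.mem_univ, true_and]
      exact fun v hv hιv => (horth v).elim hv hιv
    · simpa using hv

variable {ι : V → V} {P : Set V} [DecidablePred (· ∈ P)]

def oddExtension (hP : ∀ v, ι v ∈ P ↔ v ∉ P) (x : P → ℝ) (v : V) : ℝ :=
  if h : v ∈ P then x ⟨v, h⟩ else -x ⟨ι v, (hP v).2 h⟩

variable (hP : ∀ v, ι v ∈ P ↔ v ∉ P)
include hP

lemma oddExtension_coe (x : P → ℝ) (p : P) : oddExtension hP x p = x p :=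
  dif_pos p.2

lemma oddExtension_apply_involution (hι : Involutive ι) (x : P → ℝ) (v : V) :
    oddExtension hP x (ι v) = -oddExtension hP x v := by
  by_cases hv : v ∈ P
  · have hιv : ι v ∉ P := by rwa [hP, not_not]
    simp only [oddExtension, dif_neg hιv, dif_pos hv, hι v]
  · simp only [oddExtension, dif_pos ((hP v).2 hv), dif_neg hv, neg_neg]

lemma oddExtension_sub_comp (hι : Involutive ι) (f : V → ℝ) :
    oddExtension hP (fun p => f p - f (ι p)) = fun v => f v - f (ι v) := by
  funext v
  by_cases hv : v ∈ P
  · exact dif_pos hv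
  · simp only [oddExtension, dif_neg hv, hι v, neg_sub]

lemma continuous_oddExtension : Continuous (oddExtension hP) := by
  refine continuous_pi fun v => ?_
  unfold oddExtension
  split_ifs
  · exact continuous_apply _
  · exact (continuous_apply _).neg

variable [Fintype V]

lemma sum_eq_sum_transversal {M : Type*} [AddCommMonoid M] (hι : Involutive ι) (h : V → M) :
    ∑ v, h v = ∑ p : P, (h p + h (ι p)) := by
  classical
  rw [Finset.sum_add_distrib, ← Fintype.sum_subtype_add_sum_subtype (· ∈ P) h]
  congr 1
  exact (Fintype.sum_equiv ((hι.toPerm ι).subtypeEquiv (p := (· ∈ P)) (q := (· ∉ P))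
    fun v => by rw [Involutive.coe_toPerm, hP, not_not]) _ _ fun _ => rfl).symm

lemma card_eq_two_mul_card_transversal (hι : Involutive ι) :
    Fintype.card V = 2 * Fintype.card P := by
  have h := sum_eq_sum_transversal hP hι fun _ => (1 : ℕ)
  simp only [Finset.sum_const, Finset.card_univ, smul_eq_mul] at h
  omega

lemma sum_abs_sub_apply_involution (hι : Involutive ι) {f : V → ℝ} (hpos : ∀ v, 0 ≤ f v)
    (horth : ∀ v, f v = 0 ∨ f (ι v) = 0) : ∑ p : P, |f p - f (ι p)| = ∑ v, f v := by
  rw [sum_eq_sum_transversal hP hι]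
  refine Finset.sum_congr rfl fun p _ => ?_
  rcases horth p with h | h
  · rw [h, zero_sub, abs_neg, abs_of_nonneg (hpos _), zero_add]
  · rw [h, sub_zero, abs_of_nonneg (hpos _), add_zero]

lemma sum_max_oddExtension (hι : Involutive ι) (x : P → ℝ) :
    ∑ v, max (oddExtension hP x v) 0 = ∑ p, |x p| := by
  rw [sum_eq_sum_transversal hP hι]
  refine Finset.sum_congr rfl fun p _ => ?_
  rw [oddExtension_apply_involution hP hι, oddExtension_coe, max_zero_add_max_neg_zero_eq_abs_self]

def crossPolytopeHomeomorph (hι : Involutive ι) :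
    Realization (crossPolytopeBoundary ι) ≃ₜ {x : P → ℝ // ∑ p, |x p| = 1} where
  toFun f := ⟨fun p => f.1 p - f.1 (ι p), by
    obtain ⟨hpos, horth, hsum⟩ := mem_realization_crossPolytopeBoundary_iff.1 f.2
    rw [sum_abs_sub_apply_involution hP hι hpos horth, hsum]⟩
  invFun x := ⟨fun v => max (oddExtension hP x.1 v) 0,
    mem_realization_crossPolytopeBoundary_iff.2 ⟨fun _ => le_max_right _ _, fun v => by
      rw [oddExtension_apply_involution hP hι]
      exact (le_total (oddExtension hP x.1 v) 0).imp max_eq_right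
        fun h => max_eq_right (neg_nonpos.2 h),
      by rw [sum_max_oddExtension hP hι, x.2]⟩⟩
  left_inv f := by
    obtain ⟨hpos, horth, -⟩ := mem_realization_crossPolytopeBoundary_iff.1 f.2
    ext v
    simp only [oddExtension_sub_comp hP hι]
    rcases horth v with h | h
    · rw [h, zero_sub]; exact max_eq_right (neg_nonpos.2 (hpos _))
    · rw [h, sub_zero]; exact max_eq_left (hpos _)
  right_inv x := Subtype.ext <| funext fun p => by
    simp only [oddExtension_coe, oddExtension_apply_involution hP hι,
      max_zero_sub_max_neg_zero_eq_self]
  continuous_toFun := by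
    refine Continuous.subtype_mk (continuous_pi fun p => ?_) _
    exact ((continuous_apply _).comp continuous_subtype_val).sub
      ((continuous_apply _).comp continuous_subtype_val)
  continuous_invFun := by
    have := continuous_oddExtension hP
    fun_prop

end CrossPolytope

section Radial

variable {E F : Type*} [NormedAddCommGroup E] [NormedSpace ℝ E] [NormedAddCommGroup F]
  [NormedSpace ℝ F] {g : E → ℝ}

lemma ne_zero_of_eq_one_of_homogeneous (hsmul : ∀ (c : ℝ) x, 0 < c → g (c • x) = c * g x)
    {x : E} (hx : g x = 1) : x ≠ 0 := by
  rintro rfl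
  have h := hsmul 2 0 two_pos
  rw [smul_zero, hx] at h
  norm_num at h

noncomputable def levelSetHomeomorphSphere (e : E ≃L[ℝ] F) (hg : Continuous g)
    (hsmul : ∀ (c : ℝ) x, 0 < c → g (c • x) = c * g x) (hpos : ∀ x, x ≠ 0 → 0 < g x) :
    {x // g x = 1} ≃ₜ Metric.sphere (0 : F) 1 where
  toFun x := ⟨‖e x‖⁻¹ • e x, by
    have : e x ≠ 0 := e.map_ne_zero_iff.2 (ne_zero_of_eq_one_of_homogeneous hsmul x.2)
    rw [mem_sphere_zero_iff_norm, norm_smul, norm_inv, norm_norm,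
      inv_mul_cancel₀ (norm_ne_zero_iff.2 this)]⟩
  invFun y := ⟨(g (e.symm y))⁻¹ • e.symm y, by
    have := hpos (e.symm y) (e.symm.map_ne_zero_iff.2 (ne_zero_of_mem_unit_sphere y))
    rw [hsmul _ _ (inv_pos.2 this), inv_mul_cancel₀ this.ne']⟩
  left_inv x := by
    have hx : e x ≠ 0 := e.map_ne_zero_iff.2 (ne_zero_of_eq_one_of_homogeneous hsmul x.2)
    ext1
    simp only [map_smul, ContinuousLinearEquiv.symm_apply_apply,
      hsmul _ _ (inv_pos.2 (norm_pos_iff.2 hx)), x.2, mul_one, inv_inv, smul_smul,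
      mul_inv_cancel₀ (norm_ne_zero_iff.2 hx), one_smul]
  right_inv y := by
    have hy := hpos (e.symm y) (e.symm.map_ne_zero_iff.2 (ne_zero_of_mem_unit_sphere y))
    ext1
    simp only [map_smul, ContinuousLinearEquiv.apply_symm_apply, norm_smul, norm_inv,
      Real.norm_eq_abs, abs_of_pos hy, norm_eq_of_mem_sphere y, mul_one, inv_inv, smul_smul,
      mul_inv_cancel₀ hy.ne', one_smul]
  continuous_toFun := by
    have hx (x : {x // g x = 1}) : ‖e x‖ ≠ 0 :=
      norm_ne_zero_iff.2 (e.map_ne_zero_iff.2 (ne_zero_of_eq_one_of_homogeneous hsmul x.2))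
    fun_prop (disch := exact hx _)
  continuous_invFun := by
    have hy (y : Metric.sphere (0 : F) 1) : g (e.symm y) ≠ 0 :=
      (hpos _ (e.symm.map_ne_zero_iff.2 (ne_zero_of_mem_unit_sphere y))).ne'
    fun_prop (disch := exact hy _)

end Radial


noncomputable def l1SphereHomeomorphSphere {ι : Type*} [Fintype ι] {N : ℕ}
    (h : Fintype.card ι = N) :
    {x : ι → ℝ // ∑ i, |x i| = 1} ≃ₜ Metric.sphere (0 : EuclideanSpace ℝ (Fin N)) 1 :=
  levelSetHomeomorphSphere (ContinuousLinearEquiv.ofFinrankEq (by simp [h]))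
    (continuous_finsetSum _ fun i _ => (continuous_apply i).abs)
    (fun c x hc => by
      simp only [Pi.smul_apply, smul_eq_mul, abs_mul, abs_of_pos hc, Finset.mul_sum])
    (fun x hx => by
      obtain ⟨i, hi⟩ := Function.ne_iff.1 hx
      exact Finset.sum_pos' (fun i _ => abs_nonneg (x i)) ⟨i, Finset.mem_univ i, abs_pos.2 hi⟩)

section TorusGrid

variable {m : ℕ}

lemma natCast_half_add_self : ((m : ℕ) : ZMod (2 * m)) + m = 0 := by
  rw [← two_mul]
  exact_mod_cast ZMod.natCast_self (2 * m)

lemma natCast_half_eq_neg : ((m : ℕ) : ZMod (2 * m)) = -m :=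
  eq_neg_of_add_eq_zero_left natCast_half_add_self

lemma involutive_add_natCast_half : Involutive (· + (m : ZMod (2 * m) × ZMod (2 * m))) :=
  fun v => by
    dsimp only
    rw [add_assoc, show (m : ZMod (2 * m) × ZMod (2 * m)) + m = 0 from
      Prod.ext natCast_half_add_self natCast_half_add_self, add_zero]

variable [NeZero m]

lemma val_natCast_half : ((m : ℕ) : ZMod (2 * m)).val = m :=
  ZMod.val_cast_of_lt (by have := NeZero.pos m; omega)

lemma val_add_half_lt_iff (x : ZMod (2 * m)) : (x + m).val < m ↔ m ≤ x.val := by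
  have hx := x.val_lt
  rw [ZMod.val_add, val_natCast_half]
  rcases lt_or_ge x.val m with h | h
  · rw [Nat.mod_eq_of_lt (by omega)]; omega
  · rw [Nat.mod_eq_sub_mod (by omega), Nat.mod_eq_of_lt (by omega)]; omega

lemma cZdist_two_mul_eq_min (x y : ZMod (2 * m)) :
    cZdist (2 * m) x y = min ((x - y).val : ℤ) (2 * m - (x - y).val) := by
  have := (x - y).val_lt
  rw [cZdist, show y - x = -(x - y) by ring, ZMod.neg_val]
  split_ifs with h
  · simp [h]
  · push_cast [Nat.cast_sub this.le]; rfl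

lemma cZdist_two_mul_le (x y : ZMod (2 * m)) : cZdist (2 * m) x y ≤ m := by
  rw [cZdist_two_mul_eq_min]; omega

lemma cZdist_two_mul_eq_iff (x y : ZMod (2 * m)) : cZdist (2 * m) x y = m ↔ y = x + m := by
  have hval : (x - y).val = m ↔ y = x + m := by
    rw [show (x - y).val = m ↔ x - y = m by
      rw [← (ZMod.val_injective _).eq_iff, val_natCast_half]]
    constructor
    · intro h; rw [← sub_sub_cancel x y, h, sub_eq_add_neg, ← natCast_half_eq_neg]
    · intro h; rw [h, sub_add_cancel_left, ← natCast_half_eq_neg]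
  rw [cZdist_two_mul_eq_min, ← hval]
  omega


lemma tdist_two_mul_le (u v : ZMod (2 * m) × ZMod (2 * m)) : tdist (2 * m) u v ≤ 2 * m := by
  have := cZdist_two_mul_le u.1 v.1
  have := cZdist_two_mul_le u.2 v.2
  rw [tdist]; omega

lemma tdist_two_mul_eq_iff (u v : ZMod (2 * m) × ZMod (2 * m)) :
    tdist (2 * m) u v = 2 * m ↔ v = u + m := by
  have := cZdist_two_mul_le u.1 v.1
  have := cZdist_two_mul_le u.2 v.2
  rw [tdist, Prod.ext_iff, Prod.fst_add, Prod.snd_add, Prod.fst_natCast, Prod.snd_natCast,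
    ← cZdist_two_mul_eq_iff, ← cZdist_two_mul_eq_iff]
  omega

lemma setOf_isVRSimplex_tdist_eq :
    {σ | IsVRSimplex (tdist (2 * m)) (((2 * m : ℕ) : ℤ) - 1) σ} =
      crossPolytopeBoundary (· + (m : ZMod (2 * m) × ZMod (2 * m))) := by
  ext σ
  push_cast
  constructor
  · rintro ⟨hne, hdist⟩
    refine ⟨hne, fun v hv hιv => ?_⟩
    have := hdist v hv _ hιv
    rw [(tdist_two_mul_eq_iff v _).2 rfl] at this
    omega
  · rintro ⟨hne, hanti⟩
    refine ⟨hne, fun u hu v hv => ?_⟩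
    have hne : tdist (2 * m) u v ≠ 2 * m := by
      rw [Ne, tdist_two_mul_eq_iff]
      rintro rfl
      exact hanti u hu hv
    have := tdist_two_mul_le u v
    omega

end TorusGrid

theorem stmt17 (n : ℕ) (hn : 2 ≤ n) (heven : Even n) :
    Nonempty
      (↥(Realization {σ : Finset (ZMod n × ZMod n) |
          IsVRSimplex (tdist n) ((n : ℤ) - 1) σ}) ≃ₜ
        ↥(Metric.sphere (0 : EuclideanSpace ℝ (Fin (n ^ 2 / 2))) 1)) := by
  obtain ⟨m, rfl⟩ : ∃ m, n = 2 * m := heven.two_dvd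
  have : NeZero m := ⟨by omega⟩
  let P : Set (ZMod (2 * m) × ZMod (2 * m)) := {v | v.1.val < m}
  have hP : ∀ v, v + (m : ZMod (2 * m) × ZMod (2 * m)) ∈ P ↔ v ∉ P := fun v => by
    simp only [P, Set.mem_ofPred_eq, Prod.fst_add, Prod.fst_natCast, val_add_half_lt_iff, not_lt]
  have hcard : Fintype.card P = (2 * m) ^ 2 / 2 := by
    have := card_eq_two_mul_card_transversal hP involutive_add_natCast_half
    rw [Fintype.card_prod, ZMod.card] at this
    rw [sq, this]; omega
  rw [setOf_isVRSimplex_tdist_eq]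
  exact ⟨(crossPolytopeHomeomorph hP involutive_add_natCast_half).trans
    (l1SphereHomeomorphSphere hcard)⟩
end

section
/- Let C_n = {v₀,…,v_{n−1}} denote the cycle on n vertices with circular metric d(vᵢ,vⱼ) = min(|i−j|, n−|i−j|), and for each i let σᵢ = {vᵢ, v_{i+1}, …, v_{i+k}}, σᵢ' = {vᵢ, v_{i+k}, v_{i+2k}}, and σᵢ'' = {vᵢ, v_{i+k}, v_{i+2k−1}, v_{i+2k}}, with all indices taken modulo n. Then the set of facets of VR(C_n;k) equals: {σᵢ : 0 ≤ i ≤ n−1} if n > 3k; {σᵢ : 0 ≤ i ≤ n−1} ∪ {σᵢ' : 0 ≤ i ≤ n−1} if n = 3k and k ≥ 2; and {σᵢ : 0 ≤ i ≤ n−1} ∪ {σᵢ'' : 0 ≤ i ≤ n−1} if n = 3k−1 and k ≥ 3. -/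
/-- The arc `σ_i = {v_i, v_{i+1}, …, v_{i+k}}` in the cycle `C_n`. -/
def arc (n k : ℕ) (i : ZMod n) : Finset (ZMod n) :=
  (Finset.range (k + 1)).image (fun j : ℕ => i + (j : ZMod n))

section Helpers
variable {n : ℕ}

lemma cZdist_comm (x y : ZMod n) : cZdist n x y = cZdist n y x := min_comm _ _

lemma cZdist_le_iff {k : ℕ} (x y : ZMod n) :
    cZdist n x y ≤ (k : ℤ) ↔ (x - y).val ≤ k ∨ (y - x).val ≤ k := by
  rw [cZdist, min_le_iff, Nat.cast_le, Nat.cast_le]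

lemma val_sub_add [NeZero n] (x y : ZMod n) :
    (x - y).val + (y - x).val = n ∨ ((x - y).val = 0 ∧ (y - x).val = 0) := by
  rcases eq_or_ne x y with rfl | h
  · right; simp
  · left
    have h1 : x - y ≠ 0 := sub_ne_zero.mpr h
    have h2 : y - x = -(x - y) := by ring
    have h3 : (x - y).val ≠ 0 := fun h0 => h1 ((ZMod.val_eq_zero _).1 h0)
    have h4 := ZMod.val_lt (x - y)
    rw [h2, ZMod.neg_val, if_neg h1]
    omega

lemma cast_val_eq [NeZero n] (x : ZMod n) : ((x.val : ℕ) : ZMod n) = x :=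
  ZMod.natCast_rightInverse x

lemma eq_add_cast_val [NeZero n] (b y : ZMod n) : y = b + ((y - b).val : ZMod n) := by
  rw [cast_val_eq]; ring

lemma shift_eq [NeZero n] {b y : ZMod n} {m : ℕ} (hm : m ≤ (y - b).val) :
    y = (b + (m : ZMod n)) + (((y - b).val - m : ℕ) : ZMod n) := by
  rw [Nat.cast_sub hm, cast_val_eq]; ring

lemma val_shift [NeZero n] {b y : ZMod n} {m : ℕ} (hm : m ≤ (y - b).val) :
    (y - (b + (m : ZMod n))).val = (y - b).val - m := by
  have hlt : (y - b).val - m < n := lt_of_le_of_lt (Nat.sub_le _ _) (ZMod.val_lt _)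
  have h : y - (b + (m : ZMod n)) = (((y - b).val - m : ℕ) : ZMod n) := by
    conv_lhs => rw [shift_eq hm]
    ring
  rw [h, ZMod.val_cast_of_lt hlt]

lemma add_mem_arc {k j : ℕ} (hj : j ≤ k) (i : ZMod n) : i + (j : ZMod n) ∈ arc n k i :=
  Finset.mem_image.2 ⟨j, Finset.mem_range.2 (by omega), rfl⟩

lemma self_mem_arc {k : ℕ} (i : ZMod n) : i ∈ arc n k i := by
  simpa using add_mem_arc (Nat.zero_le k) i

lemma mem_arc {k : ℕ} [NeZero n] (hk : k < n) {i y : ZMod n} :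
    y ∈ arc n k i ↔ (y - i).val ≤ k := by
  constructor
  · intro hy
    obtain ⟨j, hj, rfl⟩ := Finset.mem_image.1 hy
    rw [Finset.mem_range] at hj
    rw [add_sub_cancel_left, ZMod.val_cast_of_lt (by omega)]
    omega
  · intro h
    have := add_mem_arc (n := n) h i
    rwa [cast_val_eq, add_sub_cancel] at this

lemma arc_card {k : ℕ} [NeZero n] (hk : k < n) (i : ZMod n) : (arc n k i).card = k + 1 := by
  rw [arc, Finset.card_image_of_injOn, Finset.card_range]
  intro a ha b hb hab
  simp only [Finset.coe_range, Set.mem_Iio] at ha hb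
  have h1 : ((a : ℕ) : ZMod n) = b := add_left_cancel hab
  have := congrArg ZMod.val h1
  rwa [ZMod.val_cast_of_lt (by omega), ZMod.val_cast_of_lt (by omega)] at this

lemma dist_le_of_eq_cast [NeZero n] {x y : ZMod n} {c k : ℕ} (hc : y - x = (c : ZMod n))
    (hcn : c < n) (h : c ≤ k ∨ n ≤ c + k) : cZdist n x y ≤ (k : ℤ) := by
  have hv : (y - x).val = c := by rw [hc, ZMod.val_cast_of_lt hcn]
  rw [cZdist_le_iff]
  rcases val_sub_add x y with h2 | h2 <;> omega

lemma dist_cast_le [NeZero n] {i x y : ZMod n} {a b k : ℕ}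
    (hx : x = i + (a : ZMod n)) (hy : y = i + (b : ZMod n)) (ha : a < n) (hb : b < n)
    (h : (b - a ≤ k ∨ n ≤ (b - a) + k) ∧ (a - b ≤ k ∨ n ≤ (a - b) + k)) :
    cZdist n x y ≤ (k : ℤ) := by
  rcases le_total a b with hab | hab
  · have hc : y - x = ((b - a : ℕ) : ZMod n) := by rw [hx, hy, Nat.cast_sub hab]; ring
    exact dist_le_of_eq_cast hc (by omega) h.1
  · rw [cZdist_comm]
    have hc : x - y = ((a - b : ℕ) : ZMod n) := by rw [hx, hy, Nat.cast_sub hab]; ring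
    exact dist_le_of_eq_cast hc (by omega) h.2

lemma arc_simplex {k : ℕ} [NeZero n] (hk : k < n) (i : ZMod n) :
    IsVRSimplex (cZdist n) (k : ℤ) (arc n k i) := by
  constructor
  · exact ⟨i, self_mem_arc i⟩
  · intro x hx y hy
    obtain ⟨a, haa, rfl⟩ := Finset.mem_image.1 hx
    obtain ⟨b, hbb, rfl⟩ := Finset.mem_image.1 hy
    rw [Finset.mem_range] at haa hbb
    exact dist_cast_le rfl rfl (by omega) (by omega) (by omega)

lemma classify [NeZero n] {k : ℕ} (hn : 2 * k + 1 ≤ n) {τ : Finset (ZMod n)}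
    (hτ : IsVRSimplex (cZdist n) (k : ℤ) τ) :
    ∃ b : ZMod n, ∃ m M : ℕ, m ≤ M ∧ M ≤ 2 * k ∧
      (∀ y ∈ τ, m ≤ (y - b).val ∧ (y - b).val ≤ M) ∧
      (b + (m : ZMod n)) ∈ τ ∧ (b + (M : ZMod n)) ∈ τ ∧
      (M - m ≤ k ∨ n ≤ (M - m) + k) := by
  obtain ⟨x, hx⟩ := hτ.1
  set b := x - (k : ZMod n) with hb
  have hf : ∀ y ∈ τ, (y - b).val ≤ 2 * k := by
    intro y hy
    rcases (cZdist_le_iff x y).1 (hτ.2 x hx y hy) with hd | hd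
    · have hc : y - b = ((k - (x - y).val : ℕ) : ZMod n) := by
        rw [Nat.cast_sub hd, cast_val_eq]; rw [hb]; ring
      rw [hc, ZMod.val_cast_of_lt (by omega)]; omega
    · have hc : y - b = (((y - x).val + k : ℕ) : ZMod n) := by
        push_cast [cast_val_eq]; rw [hb]; ring
      rw [hc, ZMod.val_cast_of_lt (by omega)]; omega
  have hne : τ.Nonempty := ⟨x, hx⟩
  set f : ZMod n → ℕ := fun y => (y - b).val with hfdef
  obtain ⟨u, hu, hum⟩ := Finset.exists_mem_eq_inf' hne f
  obtain ⟨w, hw, hwM⟩ := Finset.exists_mem_eq_sup' hne f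
  set m := τ.inf' hne f
  set M := τ.sup' hne f
  have hbd : ∀ y ∈ τ, m ≤ (y - b).val ∧ (y - b).val ≤ M := fun y hy =>
    ⟨Finset.inf'_le f hy, Finset.le_sup' f hy⟩
  have hmM : m ≤ M := by rw [hum]; exact (hbd u hu).2
  have hM2k : M ≤ 2 * k := by rw [hwM]; exact hf w hw
  have hueq : u = b + (m : ZMod n) := by rw [hum]; exact eq_add_cast_val b u
  have hweq : w = b + (M : ZMod n) := by rw [hwM]; exact eq_add_cast_val b w
  refine ⟨b, m, M, hmM, hM2k, hbd, hueq ▸ hu, hweq ▸ hw, ?_⟩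
  have hMw : M = (w - b).val := hwM
  have hmw : m ≤ (w - b).val := by omega
  have hwu : (w - u).val = M - m := by
    rw [hueq, val_shift hmw]; omega
  have hd := (cZdist_le_iff u w).1 (hτ.2 u hu w hw)
  rcases val_sub_add u w with h2 | h2 <;> omega

lemma add_cast_inj [NeZero n] {i : ZMod n} {a b : ℕ} (ha : a < n) (hb : b < n)
    (h : i + (a : ZMod n) = i + (b : ZMod n)) : a = b := by
  have h1 : ((a : ℕ) : ZMod n) = b := add_left_cancel h
  have := congrArg ZMod.val h1
  rwa [ZMod.val_cast_of_lt ha, ZMod.val_cast_of_lt hb] at this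

lemma val_addk [NeZero n] {i j : ZMod n} (c : ℕ) (h : (i - j).val + c < n) :
    ((i + (c : ZMod n)) - j).val = (i - j).val + c := by
  have hij : (((i - j).val : ℕ) : ZMod n) = i - j := cast_val_eq _
  have h2 : i + (c : ZMod n) - j = (((i - j).val + c : ℕ) : ZMod n) := by
    push_cast
    rw [hij]; ring
  rw [h2, ZMod.val_cast_of_lt h]

lemma cast_reduce [NeZero n] {a b : ℕ} (h : a = n + b) : ((a : ℕ) : ZMod n) = (b : ZMod n) := by
  subst h; push_cast [ZMod.natCast_self]; ring

lemma card3 (a b c : ZMod n) : ({a, b, c} : Finset (ZMod n)).card ≤ 3 := by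
  apply le_trans (Finset.card_insert_le _ _)
  have : ({b, c} : Finset (ZMod n)).card ≤ 2 :=
    le_trans (Finset.card_insert_le _ _) (by simp)
  omega

lemma card4 (a b c d : ZMod n) : ({a, b, c, d} : Finset (ZMod n)).card ≤ 4 := by
  apply le_trans (Finset.card_insert_le _ _)
  have := card3 b c d
  omega

lemma eq_arc_of_between [NeZero n] {k : ℕ} (hk : k < n) {i j : ZMod n} {τ : Finset (ZMod n)}
    (h1 : arc n k i ⊆ τ) (h2 : τ ⊆ arc n k j) : arc n k i = τ :=
  Finset.eq_of_subset_of_card_le h1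
    (le_trans (Finset.card_le_card h2) (by rw [arc_card hk, arc_card hk]))

end Helpers

section Case1
variable {n : ℕ} [NeZero n]

lemma subset_arc_of_small {k : ℕ} (hn : 3 * k < n) {τ : Finset (ZMod n)}
    (hτ : IsVRSimplex (cZdist n) (k : ℤ) τ) : ∃ i, τ ⊆ arc n k i := by
  obtain ⟨b, m, M, hmM, hM2k, hbd, hu, hw, hcase⟩ := classify (by omega) hτ
  refine ⟨b + (m : ZMod n), fun y hy => ?_⟩
  rw [mem_arc (by omega), val_shift (hbd y hy).1]
  have := (hbd y hy).2
  omega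

lemma case1 {k : ℕ} (h : 3 * k < n) (τ : Finset (ZMod n)) :
    IsVRFacet (cZdist n) (k : ℤ) τ ↔ ∃ i, τ = arc n k i := by
  constructor
  · rintro ⟨hs, hmax⟩
    obtain ⟨i, hsub⟩ := subset_arc_of_small h hs
    exact ⟨i, hmax _ (arc_simplex (by omega) i) hsub⟩
  · rintro ⟨i, rfl⟩
    refine ⟨arc_simplex (by omega) i, fun τ' hτ' hsub => ?_⟩
    obtain ⟨j, hsub'⟩ := subset_arc_of_small h hτ'
    exact eq_arc_of_between (by omega) hsub hsub'

end Case1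
section Case2
variable {n : ℕ} [NeZero n]

def tri (k : ℕ) (i : ZMod n) : Finset (ZMod n) :=
  {i, i + (k : ZMod n), i + ((2 * k : ℕ) : ZMod n)}

lemma tri_eq {k : ℕ} (i : ZMod n) :
    ({i, i + (k : ZMod n), i + 2 * (k : ZMod n)} : Finset (ZMod n)) = tri k i := by
  unfold tri
  norm_num

lemma mem_tri_iff {k : ℕ} {i x : ZMod n} :
    x ∈ tri k i ↔ ∃ a : ℕ, (a = 0 ∨ a = k ∨ a = 2 * k) ∧ x = i + (a : ZMod n) := by
  simp only [tri, Finset.mem_insert, Finset.mem_singleton]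
  constructor
  · rintro (rfl | rfl | rfl)
    exacts [⟨0, by tauto, by simp⟩, ⟨k, by tauto, rfl⟩, ⟨2 * k, by tauto, rfl⟩]
  · rintro ⟨a, (rfl | rfl | rfl), rfl⟩ <;> simp

lemma mem_tri_val {k : ℕ} (hn : n = 3 * k) (hk : 2 ≤ k) {i x : ZMod n} (hx : x ∈ tri k i) :
    (x - i).val = 0 ∨ (x - i).val = k ∨ (x - i).val = 2 * k := by
  obtain ⟨a, ha, rfl⟩ := mem_tri_iff.1 hx
  rw [add_sub_cancel_left, ZMod.val_cast_of_lt (by omega)]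
  exact ha

lemma tri_simplex {k : ℕ} (hn : n = 3 * k) (hk : 2 ≤ k) (i : ZMod n) :
    IsVRSimplex (cZdist n) (k : ℤ) (tri k i) := by
  constructor
  · exact ⟨i, by simp [tri]⟩
  · intro x hx y hy
    obtain ⟨a, ha, rfl⟩ := mem_tri_iff.1 hx
    obtain ⟨b, hb, rfl⟩ := mem_tri_iff.1 hy
    exact dist_cast_le rfl rfl (by omega) (by omega) (by omega)

lemma tri_card {k : ℕ} (hn : n = 3 * k) (hk : 2 ≤ k) (i : ZMod n) : (tri k i).card = 3 := by
  unfold tri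
  rw [Finset.card_insert_of_notMem, Finset.card_insert_of_notMem, Finset.card_singleton]
  · simp only [Finset.mem_singleton]
    intro h
    have := add_cast_inj (i := i) (by omega : k < n) (by omega : 2 * k < n) h
    omega
  · simp only [Finset.mem_insert, Finset.mem_singleton]
    rintro (h | h)
    · have h' : i + ((0 : ℕ) : ZMod n) = i + (k : ZMod n) := by simpa using h
      have := add_cast_inj (i := i) (by omega : (0:ℕ) < n) (by omega : k < n) h'
      omega
    · have h' : i + ((0 : ℕ) : ZMod n) = i + ((2 * k : ℕ) : ZMod n) := by simpa using h
      have := add_cast_inj (i := i) (by omega : (0:ℕ) < n) (by omega : 2 * k < n) h'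
      omega

lemma classify2 {k : ℕ} (hn : n = 3 * k) (hk : 2 ≤ k) {τ : Finset (ZMod n)}
    (hτ : IsVRSimplex (cZdist n) (k : ℤ) τ) :
    (∃ i, τ ⊆ arc n k i) ∨ (∃ i, τ ⊆ tri k i) := by
  obtain ⟨b, m, M, hmM, hM2k, hbd, hu, hw, hcase⟩ := classify (by omega) hτ
  rcases hcase with hΔ | hΔ
  · left
    refine ⟨b + (m : ZMod n), fun y hy => ?_⟩
    rw [mem_arc (by omega), val_shift (hbd y hy).1]
    have := (hbd y hy).2
    omega
  · right
    refine ⟨b + (m : ZMod n), fun y hy => ?_⟩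
    have h1 := (hbd y hy).1
    have h2 := (hbd y hy).2
    have hyu : (y - (b + (m : ZMod n))).val = (y - b).val - m := val_shift h1
    have hdu := (cZdist_le_iff (b + (m : ZMod n)) y).1 (hτ.2 _ hu y hy)
    have hsu := val_sub_add (b + (m : ZMod n)) y
    have hwb : ((b + (M : ZMod n)) - b).val = M := by
      rw [add_sub_cancel_left, ZMod.val_cast_of_lt (by omega)]
    have hwy : ((b + (M : ZMod n)) - y).val = M - (y - b).val := by
      conv_lhs => rw [eq_add_cast_val b y]
      rw [val_shift (by rw [hwb]; exact h2), hwb]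
    have hdw := (cZdist_le_iff y (b + (M : ZMod n))).1 (hτ.2 y hy _ hw)
    have hsw := val_sub_add y (b + (M : ZMod n))
    have hc : (y - b).val - m = 0 ∨ (y - b).val - m = k ∨ (y - b).val - m = 2 * k := by
      omega
    rw [mem_tri_iff]
    exact ⟨(y - b).val - m, hc, shift_eq h1⟩

lemma case2 {k : ℕ} (hn : n = 3 * k) (hk : 2 ≤ k) (τ : Finset (ZMod n)) :
    IsVRFacet (cZdist n) (k : ℤ) τ ↔
      (∃ i, τ = arc n k i) ∨ (∃ i, τ = tri k i) := by
  constructor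
  · rintro ⟨hs, hmax⟩
    rcases classify2 hn hk hs with ⟨i, hsub⟩ | ⟨i, hsub⟩
    · exact Or.inl ⟨i, hmax _ (arc_simplex (by omega) i) hsub⟩
    · exact Or.inr ⟨i, hmax _ (tri_simplex hn hk i) hsub⟩
  · rintro (⟨i, rfl⟩ | ⟨i, rfl⟩)
    · refine ⟨arc_simplex (by omega) i, fun τ' hτ' hsub => ?_⟩
      rcases classify2 hn hk hτ' with ⟨j, hsub'⟩ | ⟨j, hsub'⟩
      · exact eq_arc_of_between (by omega) hsub hsub'
      · -- arc inside a triangle: impossible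
        exfalso
        have hm0 : i ∈ tri k j := hsub' (hsub (self_mem_arc i))
        have hm1 : i + ((1 : ℕ) : ZMod n) ∈ tri k j :=
          hsub' (hsub (add_mem_arc (by omega) i))
        have hc0 := mem_tri_val hn hk hm0
        have hc1 := mem_tri_val hn hk hm1
        rw [val_addk 1 (by have := ZMod.val_lt (i - j); omega)] at hc1
        -- need (i-j).val + 1 < n : (i-j).val ≤ 2k? not known; val < n but need +1 < n
        omega
    · refine ⟨tri_simplex hn hk i, fun τ' hτ' hsub => ?_⟩
      rcases classify2 hn hk hτ' with ⟨j, hsub'⟩ | ⟨j, hsub'⟩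
      · -- triangle inside an arc: impossible
        exfalso
        have hm0 : (i - j).val ≤ k := (mem_arc (by omega)).1 (hsub' (hsub (by
          rw [mem_tri_iff]; exact ⟨0, by tauto, by simp⟩)))
        have hm1 : ((i + (k : ZMod n)) - j).val ≤ k := (mem_arc (by omega)).1 (hsub' (hsub (by
          rw [mem_tri_iff]; exact ⟨k, by tauto, rfl⟩)))
        have hm2 : ((i + ((2 * k : ℕ) : ZMod n)) - j).val ≤ k := (mem_arc (by omega)).1 (hsub' (hsub (by
          rw [mem_tri_iff]; exact ⟨2 * k, by tauto, rfl⟩)))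
        rw [val_addk k (by omega)] at hm1
        rw [val_addk (2 * k) (by omega)] at hm2
        omega
      · refine Finset.eq_of_subset_of_card_le hsub ?_
        rw [tri_card hn hk i]
        exact le_trans (Finset.card_le_card hsub') (by unfold tri; exact card3 _ _ _)

end Case2
section Case3
variable {n : ℕ} [NeZero n]

def quad (k : ℕ) (i : ZMod n) : Finset (ZMod n) :=
  {i, i + (k : ZMod n), i + ((2 * k - 1 : ℕ) : ZMod n), i + ((2 * k : ℕ) : ZMod n)}

lemma quad_eq {k : ℕ} (hk : 1 ≤ k) (i : ZMod n) :
    ({i, i + (k : ZMod n), i + 2 * (k : ZMod n) - 1, i + 2 * (k : ZMod n)} : Finset (ZMod n))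
      = quad k i := by
  unfold quad
  rw [show ((2 * k - 1 : ℕ) : ZMod n) = 2 * (k : ZMod n) - 1 by
        rw [Nat.cast_sub (by omega : 1 ≤ 2 * k)]; push_cast; ring,
      show ((2 * k : ℕ) : ZMod n) = 2 * (k : ZMod n) by push_cast; ring]
  congr 2
  ring

lemma mem_quad_iff {k : ℕ} {i x : ZMod n} :
    x ∈ quad k i ↔ ∃ a : ℕ, (a = 0 ∨ a = k ∨ a = 2 * k - 1 ∨ a = 2 * k) ∧ x = i + (a : ZMod n) := by
  simp only [quad, Finset.mem_insert, Finset.mem_singleton]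
  constructor
  · rintro (rfl | rfl | rfl | rfl)
    exacts [⟨0, by tauto, by simp⟩, ⟨k, by tauto, rfl⟩, ⟨2 * k - 1, by tauto, rfl⟩,
      ⟨2 * k, by tauto, rfl⟩]
  · rintro ⟨a, (rfl | rfl | rfl | rfl), rfl⟩ <;> simp

lemma mem_quad_val {k : ℕ} (hn : n = 3 * k - 1) (hk : 3 ≤ k) {i x : ZMod n} (hx : x ∈ quad k i) :
    (x - i).val = 0 ∨ (x - i).val = k ∨ (x - i).val = 2 * k - 1 ∨ (x - i).val = 2 * k := by
  obtain ⟨a, ha, rfl⟩ := mem_quad_iff.1 hx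
  rw [add_sub_cancel_left, ZMod.val_cast_of_lt (by omega)]
  exact ha

lemma quad_simplex {k : ℕ} (hn : n = 3 * k - 1) (hk : 3 ≤ k) (i : ZMod n) :
    IsVRSimplex (cZdist n) (k : ℤ) (quad k i) := by
  constructor
  · exact ⟨i, by simp [quad]⟩
  · intro x hx y hy
    obtain ⟨a, ha, rfl⟩ := mem_quad_iff.1 hx
    obtain ⟨b, hb, rfl⟩ := mem_quad_iff.1 hy
    exact dist_cast_le rfl rfl (by omega) (by omega) (by omega)

lemma quad_card {k : ℕ} (hn : n = 3 * k - 1) (hk : 3 ≤ k) (i : ZMod n) :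
    (quad k i).card = 4 := by
  have key : ∀ a b : ℕ, a < n → b < n → a ≠ b → i + (a : ZMod n) ≠ i + (b : ZMod n) :=
    fun a b ha hb hab h => hab (add_cast_inj ha hb h)
  have h0 : ∀ b : ℕ, b < n → b ≠ 0 → i ≠ i + (b : ZMod n) := by
    intro b hb hb0 h
    exact hb0 ((add_cast_inj (i := i) (by omega : (0:ℕ) < n) hb (by simpa using h)).symm)
  unfold quad
  rw [Finset.card_insert_of_notMem, Finset.card_insert_of_notMem,
    Finset.card_insert_of_notMem, Finset.card_singleton]
  · simp only [Finset.mem_singleton]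
    exact key (2 * k - 1) (2 * k) (by omega) (by omega) (by omega)
  · simp only [Finset.mem_insert, Finset.mem_singleton]
    push_neg
    exact ⟨key k (2 * k - 1) (by omega) (by omega) (by omega),
      key k (2 * k) (by omega) (by omega) (by omega)⟩
  · simp only [Finset.mem_insert, Finset.mem_singleton]
    push_neg
    exact ⟨h0 k (by omega) (by omega), h0 (2 * k - 1) (by omega) (by omega),
      h0 (2 * k) (by omega) (by omega)⟩

lemma cast_cast_add {a b c : ℕ} (u : ZMod n) (h : a + b = c ∨ a + b = n + c) :
    u + (a : ZMod n) + (b : ZMod n) = u + (c : ZMod n) := by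
  rw [add_assoc, ← Nat.cast_add]
  rcases h with h | h
  · rw [h]
  · rw [cast_reduce h]

set_option maxHeartbeats 1000000 in
lemma classify3 {k : ℕ} (hn : n = 3 * k - 1) (hk : 3 ≤ k) {τ : Finset (ZMod n)}
    (hτ : IsVRSimplex (cZdist n) (k : ℤ) τ) :
    (∃ i, τ ⊆ arc n k i) ∨ (∃ i, τ ⊆ quad k i) := by
  obtain ⟨b, m, M, hmM, hM2k, hbd, hu, hw, hcase⟩ := classify (by omega) hτ
  rcases hcase with hΔ | hΔ
  · left
    refine ⟨b + (m : ZMod n), fun y hy => ?_⟩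
    rw [mem_arc (by omega), val_shift (hbd y hy).1]
    have := (hbd y hy).2
    omega
  · right
    set u := b + (m : ZMod n) with hudef
    have hrel : ∀ y ∈ τ, y = u + (((y - b).val - m : ℕ) : ZMod n) := fun y hy =>
      shift_eq (hbd y hy).1
    have pairdist : ∀ y ∈ τ, ∀ z ∈ τ, ∀ c₁ c₂ : ℕ, (y - b).val - m = c₁ →
        (z - b).val - m = c₂ → c₁ ≤ c₂ → c₂ ≤ 2 * k →
        (c₂ - c₁ ≤ k ∨ n ≤ (c₂ - c₁) + k) := by
      intro y hy z hz c₁ c₂ h₁ h₂ h12 h2k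
      have hyeq := hrel y hy; rw [h₁] at hyeq
      have hzeq := hrel z hz; rw [h₂] at hzeq
      have hzy : z - y = ((c₂ - c₁ : ℕ) : ZMod n) := by
        rw [hyeq, hzeq, Nat.cast_sub h12]; ring
      have hval : (z - y).val = c₂ - c₁ := by rw [hzy, ZMod.val_cast_of_lt (by omega)]
      have hd := (cZdist_le_iff y z).1 (hτ.2 y hy z hz)
      rcases val_sub_add y z with hs | hs <;> omega
    have hwrel : ((b + (M : ZMod n)) - b).val - m = M - m := by
      rw [add_sub_cancel_left, ZMod.val_cast_of_lt (by omega)]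
    have key : ∀ y ∈ τ, (y - b).val - m = 0 ∨ (y - b).val - m = 1 ∨ (y - b).val - m = k - 1 ∨
        (y - b).val - m = k ∨ (y - b).val - m = 2 * k - 1 ∨ (y - b).val - m = 2 * k := by
      intro y hy
      have h1 := (hbd y hy).1
      have h2 := (hbd y hy).2
      have hyu : (y - u).val = (y - b).val - m := val_shift h1
      have hdu := (cZdist_le_iff u y).1 (hτ.2 _ hu y hy)
      have hsu := val_sub_add u y
      have hwb : ((b + (M : ZMod n)) - b).val = M := by
        rw [add_sub_cancel_left, ZMod.val_cast_of_lt (by omega)]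
      have hwy : ((b + (M : ZMod n)) - y).val = M - (y - b).val := by
        conv_lhs => rw [eq_add_cast_val b y]
        rw [val_shift (by rw [hwb]; exact h2), hwb]
      have hdw := (cZdist_le_iff y (b + (M : ZMod n))).1 (hτ.2 y hy _ hw)
      have hsw := val_sub_add y (b + (M : ZMod n))
      omega
    have hΔ2 : M - m = 2 * k - 1 ∨ M - m = 2 * k := by omega
    rcases hΔ2 with hD | hD
    · -- positions {0, k-1, k, 2k-1}; quad based at u + (2k-1)
      refine ⟨u + ((2 * k - 1 : ℕ) : ZMod n), fun y hy => ?_⟩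
      have hc := key y hy
      have hb2 := (hbd y hy).2
      have hb1 := (hbd y hy).1
      have hno1 : (y - b).val - m ≠ 1 := by
        intro h1
        rcases pairdist y hy _ hw 1 (2 * k - 1) h1 (hwrel.trans hD) (by omega) (by omega)
          with h | h <;> omega
      have hc' : (y - b).val - m = 0 ∨ (y - b).val - m = k - 1 ∨ (y - b).val - m = k ∨
          (y - b).val - m = 2 * k - 1 := by omega
      have hyc := hrel y hy
      rw [mem_quad_iff]
      rcases hc' with h | h | h | h <;> rw [h] at hyc
      · exact ⟨k, by tauto, by rw [hyc]; exact (cast_cast_add u (by omega)).symm⟩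
      · exact ⟨2 * k - 1, by tauto, by rw [hyc]; exact (cast_cast_add u (by omega)).symm⟩
      · exact ⟨2 * k, by tauto, by rw [hyc]; exact (cast_cast_add u (by omega)).symm⟩
      · exact ⟨0, by tauto, by rw [hyc]; exact (cast_cast_add u (by omega)).symm⟩
    · -- positions {0, 1, k, 2k-1, 2k}
      have hno : ∀ y ∈ τ, (y - b).val - m ≠ k - 1 := by
        intro y hy h1
        rcases pairdist y hy _ hw (k - 1) (2 * k) h1 (hwrel.trans hD) (by omega) (by omega)
          with h | h <;> omega
      by_cases hex : ∃ z ∈ τ, (z - b).val - m = 2 * k - 1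
      · -- quad based at u
        obtain ⟨z, hz, hzc⟩ := hex
        refine ⟨u, fun y hy => ?_⟩
        have hc := key y hy
        have hno1 : (y - b).val - m ≠ 1 := by
          intro h1
          rcases pairdist y hy z hz 1 (2 * k - 1) h1 hzc (by omega) (by omega)
            with h | h <;> omega
        have hc' : (y - b).val - m = 0 ∨ (y - b).val - m = k ∨ (y - b).val - m = 2 * k - 1 ∨
            (y - b).val - m = 2 * k := by
          have := hno y hy; omega
        have hyc := hrel y hy
        rw [mem_quad_iff]
        rcases hc' with h | h | h | h <;> rw [h] at hyc
        · exact ⟨0, by tauto, hyc⟩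
        · exact ⟨k, by tauto, hyc⟩
        · exact ⟨2 * k - 1, by tauto, hyc⟩
        · exact ⟨2 * k, by tauto, hyc⟩
      · -- quad based at u + k
        push_neg at hex
        refine ⟨u + (k : ZMod n), fun y hy => ?_⟩
        have hc := key y hy
        have hc' : (y - b).val - m = 0 ∨ (y - b).val - m = 1 ∨ (y - b).val - m = k ∨
            (y - b).val - m = 2 * k := by
          have := hno y hy; have := hex y hy; omega
        have hyc := hrel y hy
        rw [mem_quad_iff]
        rcases hc' with h | h | h | h <;> rw [h] at hyc
        · exact ⟨2 * k - 1, by tauto, by rw [hyc]; exact (cast_cast_add u (by omega)).symm⟩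
        · exact ⟨2 * k, by tauto, by rw [hyc]; exact (cast_cast_add u (by omega)).symm⟩
        · exact ⟨0, by tauto, by rw [hyc]; exact (cast_cast_add u (by omega)).symm⟩
        · exact ⟨k, by tauto, by rw [hyc]; exact (cast_cast_add u (by omega)).symm⟩

lemma case3 {k : ℕ} (hn : n = 3 * k - 1) (hk : 3 ≤ k) (τ : Finset (ZMod n)) :
    IsVRFacet (cZdist n) (k : ℤ) τ ↔
      (∃ i, τ = arc n k i) ∨ (∃ i, τ = quad k i) := by
  constructor
  · rintro ⟨hs, hmax⟩
    rcases classify3 hn hk hs with ⟨i, hsub⟩ | ⟨i, hsub⟩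
    · exact Or.inl ⟨i, hmax _ (arc_simplex (by omega) i) hsub⟩
    · exact Or.inr ⟨i, hmax _ (quad_simplex hn hk i) hsub⟩
  · rintro (⟨i, rfl⟩ | ⟨i, rfl⟩)
    · refine ⟨arc_simplex (by omega) i, fun τ' hτ' hsub => ?_⟩
      rcases classify3 hn hk hτ' with ⟨j, hsub'⟩ | ⟨j, hsub'⟩
      · exact eq_arc_of_between (by omega) hsub hsub'
      · -- arc inside a quad: impossible
        exfalso
        have hm0 := mem_quad_val hn hk (hsub' (hsub (self_mem_arc i)))
        have hm1 := mem_quad_val hn hk (hsub' (hsub (add_mem_arc (by omega : 1 ≤ k) i)))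
        rw [val_addk 1 (by omega)] at hm1
        have hm2 := mem_quad_val hn hk (hsub' (hsub (add_mem_arc (by omega : 2 ≤ k) i)))
        rw [val_addk 2 (by omega)] at hm2
        omega
    · refine ⟨quad_simplex hn hk i, fun τ' hτ' hsub => ?_⟩
      rcases classify3 hn hk hτ' with ⟨j, hsub'⟩ | ⟨j, hsub'⟩
      · -- quad inside an arc: impossible
        exfalso
        have hm0 : (i - j).val ≤ k := (mem_arc (by omega)).1 (hsub' (hsub (by
          rw [mem_quad_iff]; exact ⟨0, by tauto, by simp⟩)))
        have hm1 : ((i + (k : ZMod n)) - j).val ≤ k := (mem_arc (by omega)).1 (hsub' (hsub (by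
          rw [mem_quad_iff]; exact ⟨k, by tauto, rfl⟩)))
        have hm2 : ((i + ((2 * k - 1 : ℕ) : ZMod n)) - j).val ≤ k :=
          (mem_arc (by omega)).1 (hsub' (hsub (by
            rw [mem_quad_iff]; exact ⟨2 * k - 1, by tauto, rfl⟩)))
        rw [val_addk k (by omega)] at hm1
        rw [val_addk (2 * k - 1) (by omega)] at hm2
        omega
      · refine Finset.eq_of_subset_of_card_le hsub ?_
        rw [quad_card hn hk i]
        exact le_trans (Finset.card_le_card hsub') (by unfold quad; exact card4 _ _ _ _)

end Case3

theorem stmt19 (n k : ℕ) :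
    (3 * k < n → ∀ τ : Finset (ZMod n),
      IsVRFacet (cZdist n) (k : ℤ) τ ↔ ∃ i : ZMod n, τ = arc n k i) ∧
    (n = 3 * k → 2 ≤ k → ∀ τ : Finset (ZMod n),
      IsVRFacet (cZdist n) (k : ℤ) τ ↔
        ((∃ i : ZMod n, τ = arc n k i) ∨
         (∃ i : ZMod n, τ = {i, i + (k : ZMod n), i + 2 * (k : ZMod n)}))) ∧
    (n = 3 * k - 1 → 3 ≤ k → ∀ τ : Finset (ZMod n),
      IsVRFacet (cZdist n) (k : ℤ) τ ↔
        ((∃ i : ZMod n, τ = arc n k i) ∨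
         (∃ i : ZMod n, τ = {i, i + (k : ZMod n),
            i + 2 * (k : ZMod n) - 1, i + 2 * (k : ZMod n)}))) := by
  refine ⟨?_, ?_, ?_⟩
  · intro h3 τ
    haveI : NeZero n := ⟨by omega⟩
    exact case1 h3 τ
  · intro hn hk τ
    haveI : NeZero n := ⟨by omega⟩
    rw [case2 hn hk τ]
    constructor
    · rintro (h | ⟨i, rfl⟩)
      · exact Or.inl h
      · exact Or.inr ⟨i, (tri_eq i).symm⟩
    · rintro (h | ⟨i, rfl⟩)
      · exact Or.inl h
      · exact Or.inr ⟨i, tri_eq i⟩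
  · intro hn hk τ
    haveI : NeZero n := ⟨by omega⟩
    rw [case3 hn hk τ]
    constructor
    · rintro (h | ⟨i, rfl⟩)
      · exact Or.inl h
      · exact Or.inr ⟨i, (quad_eq (by omega) i).symm⟩
    · rintro (h | ⟨i, rfl⟩)
      · exact Or.inl h
      · exact Or.inr ⟨i, quad_eq (by omega) i⟩
end
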